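/- arXiv:2102.03013 — 9 statements merged into one kernel-verified Lean document; each statement's English description precedes it below -/
import Mathlib

section
/- (Post-processing) Let P and Q be probability measures on a measurable space Ω and let κ be a Markov kernel from Ω to a measurable space Ω'. Then T(P‖Q) ⪯ T(P∘κ ‖ Q∘κ), where P∘κ denotes the probability measure on Ω' obtained by composing P with the kernel κ (i.e., (P∘κ)(A) = ∫ κ(x)(A) dP(x)). -/
open MeasureTheory ProbabilityTheory

/-- The tradeoff function `T(P‖Q)(α) = inf {1 − ∫ φ dQ : φ measurable, 0 ≤ φ ≤ 1, ∫ φ dP ≤ α}`. -/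
noncomputable def tradeoff {Ω : Type*} [MeasurableSpace Ω] (P Q : Measure Ω) (α : ℝ) : ℝ :=
  sInf { b : ℝ | ∃ φ : Ω → ℝ, Measurable φ ∧ (∀ x, φ x ∈ Set.Icc (0 : ℝ) 1) ∧
    (∫ x, φ x ∂P) ≤ α ∧ b = 1 - ∫ x, φ x ∂Q }

lemma integrable_of_Icc {Ω : Type*} [MeasurableSpace Ω] (μ : Measure Ω) [IsProbabilityMeasure μ]
    {φ : Ω → ℝ} (hφ : Measurable φ) (hb : ∀ x, φ x ∈ Set.Icc (0:ℝ) 1) : Integrable φ μ := by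
  refine (integrable_const (1:ℝ)).mono' hφ.aestronglyMeasurable ?_
  filter_upwards with x
  rw [Real.norm_eq_abs, abs_of_nonneg (hb x).1]
  exact (hb x).2

lemma integral_le_one_of_Icc {Ω : Type*} [MeasurableSpace Ω] (μ : Measure Ω)
    [IsProbabilityMeasure μ] {φ : Ω → ℝ} (hφ : Measurable φ)
    (hb : ∀ x, φ x ∈ Set.Icc (0:ℝ) 1) : ∫ x, φ x ∂μ ≤ 1 := by
  calc ∫ x, φ x ∂μ ≤ ∫ _, (1:ℝ) ∂μ :=
        integral_mono (integrable_of_Icc μ hφ hb) (integrable_const 1) fun x => (hb x).2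
    _ = 1 := by simp

lemma integral_bind_eq {Ω Ω' : Type*} [MeasurableSpace Ω] [MeasurableSpace Ω']
    (P : Measure Ω) [IsProbabilityMeasure P] (κ : Kernel Ω Ω') [IsMarkovKernel κ]
    {φ : Ω' → ℝ} (hφ : Measurable φ) (hb : ∀ x, φ x ∈ Set.Icc (0:ℝ) 1) :
    ∫ y, φ y ∂(P.bind fun x => κ x) = ∫ x, ∫ y, φ y ∂(κ x) ∂P := by
  have hmκ : Measurable fun x => κ x := κ.measurable
  have h1 : ∫ y, φ y ∂(P.bind fun x => κ x)
      = (∫⁻ y, ENNReal.ofReal (φ y) ∂(P.bind fun x => κ x)).toReal := by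
    rw [integral_eq_lintegral_of_nonneg_ae (Filter.Eventually.of_forall fun x => (hb x).1)
      hφ.aestronglyMeasurable]
  rw [h1, Measure.lintegral_bind hmκ.aemeasurable (hφ.ennreal_ofReal).aemeasurable]
  have h2 : ∀ x, ∫⁻ y, ENNReal.ofReal (φ y) ∂(κ x) = ENNReal.ofReal (∫ y, φ y ∂(κ x)) := by
    intro x
    rw [← ofReal_integral_eq_lintegral_ofReal (integrable_of_Icc (κ x) hφ hb)
      (Filter.Eventually.of_forall fun y => (hb y).1)]
  simp_rw [h2]
  rw [← integral_eq_lintegral_of_nonneg_ae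
    (Filter.Eventually.of_forall fun x => integral_nonneg fun y => (hb y).1)
    (StronglyMeasurable.integral_kernel_prod_right (κ := κ) (f := fun _ y => φ y)
      (hφ.stronglyMeasurable.comp_measurable measurable_snd)).aestronglyMeasurable]

/-- Post-processing: for any Markov kernel `κ`,
`T(P‖Q) ⪯ T(P∘κ‖Q∘κ)` pointwise on `[0,1]`. -/
theorem tradeoff_post_processing {Ω Ω' : Type*} [MeasurableSpace Ω] [MeasurableSpace Ω']
    (P Q : Measure Ω) [IsProbabilityMeasure P] [IsProbabilityMeasure Q]
    (κ : Kernel Ω Ω') [IsMarkovKernel κ] :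
    ∀ α ∈ Set.Icc (0 : ℝ) 1,
      tradeoff P Q α ≤ tradeoff (P.bind fun x => κ x) (Q.bind fun x => κ x) α := by
  intro α hα
  have hbdd : BddBelow { b : ℝ | ∃ φ : Ω → ℝ, Measurable φ ∧
      (∀ x, φ x ∈ Set.Icc (0 : ℝ) 1) ∧ (∫ x, φ x ∂P) ≤ α ∧ b = 1 - ∫ x, φ x ∂Q } := by
    refine ⟨0, ?_⟩
    rintro b ⟨φ, hm, hb, -, rfl⟩
    linarith [integral_le_one_of_Icc Q hm hb]
  have hne : { b : ℝ | ∃ φ : Ω' → ℝ, Measurable φ ∧ (∀ x, φ x ∈ Set.Icc (0 : ℝ) 1) ∧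
      (∫ x, φ x ∂(P.bind fun x => κ x)) ≤ α ∧
      b = 1 - ∫ x, φ x ∂(Q.bind fun x => κ x) }.Nonempty := by
    refine ⟨1, fun _ => 0, measurable_const, fun x => ⟨le_rfl, zero_le_one⟩, ?_, by simp⟩
    simpa using hα.1
  refine csInf_le_csInf hbdd hne ?_
  rintro b ⟨φ, hm, hb, hPα, rfl⟩
  refine ⟨fun x => ∫ y, φ y ∂(κ x),
    (StronglyMeasurable.integral_kernel_prod_right (κ := κ) (f := fun _ y => φ y)
      (hm.stronglyMeasurable.comp_measurable measurable_snd)).measurable,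
    fun x => ⟨integral_nonneg fun y => (hb y).1, integral_le_one_of_Icc (κ x) hm hb⟩, ?_, ?_⟩
  · rw [← integral_bind_eq P κ hm hb]; exact hPα
  · rw [← integral_bind_eq Q κ hm hb]
end

section
/- (Sufficient statistic) Let P₁ and P₂ be probability measures on a measurable space Y and let κ be a Markov kernel from Y to a measurable space X. Let Q₁ = P₁ ⊗ κ and Q₂ = P₂ ⊗ κ be the joint probability measures on Y × X in which the first coordinate has law Pᵢ and, conditionally on the first coordinate being y, the second coordinate has law κ(y). Then T(Q₁‖Q₂) = T(P₁‖P₂), i.e., the two tradeoff functions agree at every α ∈ [0,1]. -/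
open MeasureTheory ProbabilityTheory

private lemma integrable_of_bdd {Ω : Type*} [MeasurableSpace Ω] {μ : Measure Ω}
    [IsFiniteMeasure μ] {φ : Ω → ℝ} (hm : Measurable φ)
    (h01 : ∀ x, φ x ∈ Set.Icc (0 : ℝ) 1) : Integrable φ μ := by
  refine (integrable_const (1 : ℝ)).mono' hm.aestronglyMeasurable ?_
  filter_upwards with x
  rw [Real.norm_eq_abs, abs_of_nonneg (h01 x).1]
  exact (h01 x).2

/-- Sufficient statistic: if `Qᵢ = Pᵢ ⊗ₘ κ` are the joint laws in which the
first coordinate has law `Pᵢ` and, conditionally on it being `y`, the second has law `κ y`,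
then `T(Q₁‖Q₂) = T(P₁‖P₂)` on `[0,1]`. -/
theorem tradeoff_sufficient_statistic {Y X : Type*} [MeasurableSpace Y] [MeasurableSpace X]
    (P₁ P₂ : Measure Y) [IsProbabilityMeasure P₁] [IsProbabilityMeasure P₂]
    (κ : Kernel Y X) [IsMarkovKernel κ] :
    ∀ α ∈ Set.Icc (0 : ℝ) 1,
      tradeoff (P₁ ⊗ₘ κ) (P₂ ⊗ₘ κ) α = tradeoff P₁ P₂ α := by
  intro α _
  unfold tradeoff
  congr 1
  ext b
  constructor
  · rintro ⟨ψ, hm, h01, hint, rfl⟩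
    refine ⟨fun y => ∫ x, ψ (y, x) ∂κ y, ?_, ?_, ?_, ?_⟩
    · exact (hm.stronglyMeasurable.integral_kernel_prod_right' (κ := κ)).measurable
    · intro y
      have h1 : ∀ x, ψ (y, x) ∈ Set.Icc (0 : ℝ) 1 := fun x => h01 _
      constructor
      · exact integral_nonneg fun x => (h1 x).1
      · calc ∫ x, ψ (y, x) ∂κ y ≤ ∫ _, (1 : ℝ) ∂κ y :=
              integral_mono (integrable_of_bdd (hm.comp measurable_prodMk_left) h1)
                (integrable_const 1) (fun x => (h1 x).2)
          _ = 1 := by simp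
    · rw [← Measure.integral_compProd (integrable_of_bdd hm h01)]
      exact hint
    · rw [← Measure.integral_compProd (integrable_of_bdd hm h01)]
  · rintro ⟨φ, hm, h01, hint, rfl⟩
    have key : ∀ (P : Measure Y) [IsProbabilityMeasure P],
        ∫ z, φ (Prod.fst z) ∂(P ⊗ₘ κ) = ∫ y, φ y ∂P := by
      intro P _
      have hInt : Integrable (fun z : Y × X => φ z.1) (P ⊗ₘ κ) :=
        integrable_of_bdd (hm.comp measurable_fst) (fun z => h01 z.1)
      rw [Measure.integral_compProd hInt]
      simp
    refine ⟨fun z => φ z.1, hm.comp measurable_fst, fun z => h01 z.1, ?_, ?_⟩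
    · rw [key P₁]; exact hint
    · rw [key P₂]
end

section
/- (Well-definedness of the composition operation ⊗) Let P₁, Q₁ be probability measures on a measurable space Ω₁, P₂, Q₂ probability measures on Ω₂, P₁', Q₁' probability measures on Ω₁', and P₂', Q₂' probability measures on Ω₂'. If T(P₁‖Q₁) = T(P₁'‖Q₁') and T(P₂‖Q₂) = T(P₂'‖Q₂') (as functions on [0,1]), then T(P₁ × P₂ ‖ Q₁ × Q₂) = T(P₁' × P₂' ‖ Q₁' × Q₂'), where × denotes the product of measures. In other words, the tradeoff function of a product of independent pairs depends only on the tradeoff functions of the individual pairs. -/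
open MeasureTheory ProbabilityTheory

section Aux
variable {Ω : Type*} [MeasurableSpace Ω] {P Q : Measure Ω} {α : ℝ}

def tset (P Q : Measure Ω) (α : ℝ) : Set ℝ :=
  { b : ℝ | ∃ φ : Ω → ℝ, Measurable φ ∧ (∀ x, φ x ∈ Set.Icc (0 : ℝ) 1) ∧
    (∫ x, φ x ∂P) ≤ α ∧ b = 1 - ∫ x, φ x ∂Q }

lemma tradeoff_eq (P Q : Measure Ω) (α : ℝ) : tradeoff P Q α = sInf (tset P Q α) := rfl

lemma integrable_test {μ : Measure Ω} [IsFiniteMeasure μ] {φ : Ω → ℝ} (hφ : Measurable φ)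
    (hI : ∀ x, φ x ∈ Set.Icc (0 : ℝ) 1) : Integrable φ μ := by
  refine (integrable_const (1 : ℝ)).mono' hφ.aestronglyMeasurable (ae_of_all _ fun x => ?_)
  rw [Real.norm_eq_abs, abs_le]
  exact ⟨by linarith [(hI x).1], (hI x).2⟩

lemma integral_test_mem {μ : Measure Ω} [IsProbabilityMeasure μ] {φ : Ω → ℝ} (hφ : Measurable φ)
    (hI : ∀ x, φ x ∈ Set.Icc (0 : ℝ) 1) : (∫ x, φ x ∂μ) ∈ Set.Icc (0 : ℝ) 1 := by
  constructor
  · exact integral_nonneg fun x => (hI x).1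
  · calc (∫ x, φ x ∂μ) ≤ ∫ _, (1 : ℝ) ∂μ :=
          integral_mono (integrable_test hφ hI) (integrable_const 1) fun x => (hI x).2
      _ = 1 := by simp

lemma bddBelow_tset [IsProbabilityMeasure Q] : BddBelow (tset P Q α) := by
  refine ⟨0, fun b hb => ?_⟩
  obtain ⟨φ, hφ, hI, _, rfl⟩ := hb
  linarith [(integral_test_mem (μ := Q) hφ hI).2]

lemma nonempty_tset [IsProbabilityMeasure P] (hα : 0 ≤ α) : (tset P Q α).Nonempty := by
  refine ⟨1, fun _ => 0, measurable_const, fun x => by simp, by simpa using hα, by simp⟩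

lemma tradeoff_le [IsProbabilityMeasure Q] {φ : Ω → ℝ} (hφ : Measurable φ)
    (hI : ∀ x, φ x ∈ Set.Icc (0 : ℝ) 1) (hP : (∫ x, φ x ∂P) ≤ α) :
    tradeoff P Q α ≤ 1 - ∫ x, φ x ∂Q :=
  csInf_le bddBelow_tset ⟨φ, hφ, hI, hP, rfl⟩

lemma tradeoff_nonneg [IsProbabilityMeasure Q] : 0 ≤ tradeoff P Q α := by
  rw [tradeoff_eq]
  refine Real.sInf_nonneg fun b hb => ?_
  obtain ⟨φ, hφ, hI, _, rfl⟩ := hb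
  linarith [(integral_test_mem (μ := Q) hφ hI).2]

lemma tradeoff_le_one [IsProbabilityMeasure Q] (hα : 0 ≤ α) : tradeoff P Q α ≤ 1 := by
  have := tradeoff_le (P := P) (Q := Q) (α := α) (φ := fun _ => 0) measurable_const
    (fun x => by simp) (by simpa using hα)
  simpa using this

lemma exists_test [IsProbabilityMeasure P] [IsProbabilityMeasure Q] (hα : 0 ≤ α) {ε : ℝ}
    (hε : 0 < ε) : ∃ φ : Ω → ℝ, Measurable φ ∧ (∀ x, φ x ∈ Set.Icc (0 : ℝ) 1) ∧
      (∫ x, φ x ∂P) ≤ α ∧ 1 - (∫ x, φ x ∂Q) < tradeoff P Q α + ε := by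
  obtain ⟨b, hb, hblt⟩ := exists_lt_of_csInf_lt (nonempty_tset hα)
    (lt_add_of_pos_right (sInf (tset P Q α)) hε)
  obtain ⟨φ, hφ, hI, hP, rfl⟩ := hb
  exact ⟨φ, hφ, hI, hP, hblt⟩

lemma tradeoff_antitone [IsProbabilityMeasure P] [IsProbabilityMeasure Q] {β : ℝ}
    (hα : 0 ≤ α) (hαβ : α ≤ β) : tradeoff P Q β ≤ tradeoff P Q α := by
  refine csInf_le_csInf bddBelow_tset (nonempty_tset hα) fun b hb => ?_
  obtain ⟨φ, hφ, hI, hP, rfl⟩ := hb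
  exact ⟨φ, hφ, hI, hP.trans hαβ, rfl⟩

lemma tradeoff_quant [IsProbabilityMeasure P] [IsProbabilityMeasure Q] {s t : ℝ}
    (hs : 0 < s) (hst : s ≤ t) : tradeoff P Q s ≤ tradeoff P Q t + (1 - s / t) := by
  have ht : 0 < t := hs.trans_le hst
  refine le_of_forall_pos_le_add fun ε hε => ?_
  obtain ⟨φ, hφ, hI, hP, hQ⟩ := exists_test (P := P) (Q := Q) ht.le hε
  set c : ℝ := s / t with hc
  have hc0 : 0 ≤ c := div_nonneg hs.le ht.le
  have hc1 : c ≤ 1 := (div_le_one ht).2 hst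
  have hIQ := integral_test_mem (μ := Q) hφ hI
  have hIP := integral_test_mem (μ := P) hφ hI
  have key : tradeoff P Q s ≤ 1 - ∫ x, c * φ x ∂Q := by
    refine tradeoff_le ((measurable_const (a := c)).mul hφ) (fun x => ⟨mul_nonneg hc0 (hI x).1,
      by nlinarith [(hI x).1, (hI x).2]⟩) ?_
    rw [integral_const_mul]
    calc c * ∫ x, φ x ∂P ≤ c * t := mul_le_mul_of_nonneg_left hP hc0
      _ = s := by rw [hc]; field_simp
  rw [integral_const_mul] at key
  nlinarith [hIQ.1, hIQ.2]

end Aux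

section Swap
variable {Ω₁ Ω₂ : Type*} [MeasurableSpace Ω₁] [MeasurableSpace Ω₂]

lemma integral_swap_prod (μ : Measure Ω₁) (μ₂ : Measure Ω₂) [SFinite μ] [SFinite μ₂]
    {φ : Ω₁ × Ω₂ → ℝ} (hφ : Measurable φ) :
    ∫ z, φ z.swap ∂(μ₂.prod μ) = ∫ z, φ z ∂(μ.prod μ₂) := by
  rw [← Measure.prod_swap,
    integral_map measurable_swap.aemeasurable
      (f := fun z : Ω₂ × Ω₁ => φ z.swap) (by exact (hφ.comp measurable_swap).aestronglyMeasurable)]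
  simp

lemma tset_prod_comm_subset (p q : Measure Ω₁) (p₂ q₂ : Measure Ω₂)
    [SFinite p] [SFinite q] [SFinite p₂] [SFinite q₂] (α : ℝ) :
    tset (p.prod p₂) (q.prod q₂) α ⊆ tset (p₂.prod p) (q₂.prod q) α := by
  rintro b ⟨φ, hφ, hI, hP, rfl⟩
  refine ⟨fun z => φ z.swap, hφ.comp measurable_swap, fun z => hI _, ?_, ?_⟩
  · rw [integral_swap_prod p p₂ hφ]; exact hP
  · rw [integral_swap_prod q q₂ hφ]

lemma tradeoff_prod_comm (p q : Measure Ω₁) (p₂ q₂ : Measure Ω₂)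
    [SFinite p] [SFinite q] [SFinite p₂] [SFinite q₂] (α : ℝ) :
    tradeoff (p.prod p₂) (q.prod q₂) α = tradeoff (p₂.prod p) (q₂.prod q) α := by
  rw [tradeoff_eq, tradeoff_eq]
  congr 1
  exact Set.Subset.antisymm (tset_prod_comm_subset p q p₂ q₂ α)
    (tset_prod_comm_subset p₂ q₂ p q α)

end Swap

section Key
open Filter
variable {Ω₁ Ω₂ Ω₂' : Type*} [MeasurableSpace Ω₁] [MeasurableSpace Ω₂] [MeasurableSpace Ω₂']

lemma tradeoff_prod_le
    (P₁ Q₁ : Measure Ω₁) [IsProbabilityMeasure P₁] [IsProbabilityMeasure Q₁]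
    (P₂ Q₂ : Measure Ω₂) [IsProbabilityMeasure P₂] [IsProbabilityMeasure Q₂]
    (P₂' Q₂' : Measure Ω₂') [IsProbabilityMeasure P₂'] [IsProbabilityMeasure Q₂']
    (h : ∀ t ∈ Set.Icc (0:ℝ) 1, tradeoff P₂ Q₂ t = tradeoff P₂' Q₂' t)
    {α : ℝ} (hα0 : 0 ≤ α) :
    tradeoff (P₁.prod P₂) (Q₁.prod Q₂) α ≤ tradeoff (P₁.prod P₂') (Q₁.prod Q₂') α := by
  refine le_of_forall_pos_le_add fun ε hε => ?_
  have hε2 : 0 < ε/2 := by linarith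
  obtain ⟨φ, hφ, hIcc, hP, hQ⟩ := exists_test (P := P₁.prod P₂') (Q := Q₁.prod Q₂') hα0 hε2
  set a : Ω₁ → ℝ := fun x => ∫ y, φ (x, y) ∂P₂' with ha_def
  set g : Ω₁ → ℝ := fun x => ∫ y, φ (x, y) ∂Q₂' with hg_def
  have ha_meas : Measurable a := (hφ.stronglyMeasurable.integral_prod_right').measurable
  have hg_meas : Measurable g := (hφ.stronglyMeasurable.integral_prod_right').measurable
  have hsec : ∀ x : Ω₁, Measurable fun y => φ (x, y) := fun x => hφ.comp measurable_prodMk_left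
  have hsecI : ∀ x y, φ (x, y) ∈ Set.Icc (0:ℝ) 1 := fun x y => hIcc _
  have ha_Icc : ∀ x, a x ∈ Set.Icc (0:ℝ) 1 := fun x => integral_test_mem (hsec x) (hsecI x)
  have hg_Icc : ∀ x, g x ∈ Set.Icc (0:ℝ) 1 := fun x => integral_test_mem (hsec x) (hsecI x)
  have hprodP : ∫ z, φ z ∂(P₁.prod P₂') = ∫ x, a x ∂P₁ :=
    integral_prod φ (integrable_test hφ hIcc)
  have hprodQ : ∫ z, φ z ∂(Q₁.prod Q₂') = ∫ x, g x ∂Q₁ :=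
    integral_prod φ (integrable_test hφ hIcc)
  set f : ℝ → ℝ := fun t => tradeoff P₂ Q₂ (max t 0) with hf_def
  have hf_anti : Antitone f := fun s t hst =>
    tradeoff_antitone (le_max_right _ _) (max_le_max hst le_rfl)
  have hf_meas : Measurable f := hf_anti.measurable
  have hf_eq : ∀ t, 0 ≤ t → f t = tradeoff P₂ Q₂ t := fun t ht => by
    rw [hf_def]; simp [max_eq_left ht]
  have hf_Icc : ∀ t, f t ∈ Set.Icc (0:ℝ) 1 := fun t =>
    ⟨tradeoff_nonneg, tradeoff_le_one (le_max_right _ _)⟩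
  have hfa_le : ∀ x, f (a x) ≤ 1 - g x := by
    intro x
    rw [hf_eq _ (ha_Icc x).1, h _ (ha_Icc x)]
    exact tradeoff_le (hsec x) (hsecI x) le_rfl
  have hfa_meas : Measurable fun x => f (a x) := hf_meas.comp ha_meas
  have hfa_int : Integrable (fun x => f (a x)) Q₁ := integrable_test hfa_meas fun x => hf_Icc _
  have hg_int : Integrable g Q₁ := integrable_test hg_meas hg_Icc
  have step1 : ∫ x, f (a x) ∂Q₁ ≤ tradeoff (P₁.prod P₂') (Q₁.prod Q₂') α + ε/2 := by
    have h1 : ∫ x, f (a x) ∂Q₁ ≤ ∫ x, (1 - g x) ∂Q₁ :=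
      integral_mono hfa_int ((integrable_const 1).sub hg_int) fun x => hfa_le x
    have h2 : ∫ x, (1 - g x) ∂Q₁ = 1 - ∫ x, g x ∂Q₁ := by
      rw [integral_sub (integrable_const 1) hg_int]; simp
    rw [h2, ← hprodQ] at h1
    linarith
  -- dyadic approximations
  set k : ℕ → Ω₁ → ℕ := fun n x => ⌊(2:ℝ)^n * a x⌋₊ with hk_def
  set aN : ℕ → Ω₁ → ℝ := fun n x => (k n x : ℝ) / 2^n with haN_def
  have h2pos : ∀ n : ℕ, (0:ℝ) < 2^n := fun n => by positivity
  have hk_meas : ∀ n, Measurable (k n) := fun n => (ha_meas.const_mul _).nat_floor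
  have haN_nonneg : ∀ n x, 0 ≤ aN n x := fun n x => by positivity
  have haN_le : ∀ n x, aN n x ≤ a x := by
    intro n x
    rw [haN_def, div_le_iff₀ (h2pos n)]
    calc ((k n x : ℝ)) ≤ (2:ℝ)^n * a x := Nat.floor_le (mul_nonneg (h2pos n).le (ha_Icc x).1)
      _ = a x * 2^n := mul_comm _ _
  have haN_lt : ∀ n x, a x < aN n x + (1/2)^n := by
    intro n x
    have h1 : (2:ℝ)^n * a x < k n x + 1 := Nat.lt_floor_add_one _
    have h2 : a x = ((2:ℝ)^n * a x) / 2^n := by field_simp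
    rw [h2]
    calc ((2:ℝ)^n * a x) / 2^n < ((k n x : ℝ) + 1) / 2^n := by gcongr
      _ = aN n x + (1/2)^n := by rw [haN_def, one_div_pow]; ring
  have haN_zero : ∀ n x, a x = 0 → aN n x = 0 := fun n x h0 =>
    le_antisymm (h0 ▸ haN_le n x) (haN_nonneg n x)
  -- Claim A: for each n, the LHS tradeoff is at most ∫ f (aN n x) dQ₁ + ε/2
  have haN_meas : ∀ n, Measurable fun x => f (aN n x) := by
    intro n
    exact (measurable_from_top (f := fun i : ℕ => f ((i : ℝ) / 2^n))).comp (hk_meas n)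
  have claimA : ∀ n, tradeoff (P₁.prod P₂) (Q₁.prod Q₂) α ≤ ∫ x, f (aN n x) ∂Q₁ + ε/2 := by
    intro n
    choose ψ hψm hψI hψP hψQ using fun i : ℕ =>
      exists_test (P := P₂) (Q := Q₂) (α := (i:ℝ)/2^n) (by positivity) hε2
    set Φ : Ω₁ × Ω₂ → ℝ := fun p => ψ (k n p.1) p.2 with hΦ_def
    have hΦm : Measurable Φ :=
      (measurable_from_prod_countable_left (fun i => hψm i) :
        Measurable fun q : Ω₂ × ℕ => ψ q.2 q.1).comp
        ((measurable_snd).prodMk ((hk_meas n).comp measurable_fst))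
    have hΦI : ∀ p, Φ p ∈ Set.Icc (0:ℝ) 1 := fun p => hψI _ _
    set I : ℕ → ℝ := fun i => ∫ y, ψ i y ∂P₂ with hI_def
    set J : ℕ → ℝ := fun i => ∫ y, ψ i y ∂Q₂ with hJ_def
    have hI_Icc : ∀ i, I i ∈ Set.Icc (0:ℝ) 1 := fun i => integral_test_mem (hψm i) (hψI i)
    have hJ_Icc : ∀ i, J i ∈ Set.Icc (0:ℝ) 1 := fun i => integral_test_mem (hψm i) (hψI i)
    have hProdP : ∫ z, Φ z ∂(P₁.prod P₂) = ∫ x, I (k n x) ∂P₁ :=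
      integral_prod Φ (integrable_test hΦm hΦI)
    have hProdQ : ∫ z, Φ z ∂(Q₁.prod Q₂) = ∫ x, J (k n x) ∂Q₁ :=
      integral_prod Φ (integrable_test hΦm hΦI)
    have hIk_meas : Measurable fun x => I (k n x) :=
      (measurable_from_top (f := I)).comp (hk_meas n)
    have hJk_meas : Measurable fun x => J (k n x) :=
      (measurable_from_top (f := J)).comp (hk_meas n)
    have hlevel : ∫ z, Φ z ∂(P₁.prod P₂) ≤ α := by
      rw [hProdP]
      calc ∫ x, I (k n x) ∂P₁ ≤ ∫ x, a x ∂P₁ := by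
            refine integral_mono (integrable_test hIk_meas fun x => hI_Icc _)
              (integrable_test ha_meas ha_Icc) fun x => ?_
            exact (hψP (k n x)).trans (haN_le n x)
        _ ≤ α := by rw [← hprodP]; exact hP
    have key := tradeoff_le (P := P₁.prod P₂) (Q := Q₁.prod Q₂) hΦm hΦI hlevel
    have hval : 1 - ∫ z, Φ z ∂(Q₁.prod Q₂) ≤ ∫ x, f (aN n x) ∂Q₁ + ε/2 := by
      rw [hProdQ]
      have h1 : 1 - ∫ x, J (k n x) ∂Q₁ = ∫ x, (1 - J (k n x)) ∂Q₁ := by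
        rw [integral_sub (integrable_const 1) (integrable_test hJk_meas fun x => hJ_Icc _)]
        simp
      have h2 : ∫ x, (1 - J (k n x)) ∂Q₁ ≤ ∫ x, (f (aN n x) + ε/2) ∂Q₁ := by
        refine integral_mono ((integrable_const 1).sub
          (integrable_test hJk_meas fun x => hJ_Icc _))
          ((integrable_test (haN_meas n) fun x => hf_Icc _).add (integrable_const _))
          fun x => ?_
        have := hψQ (k n x)
        have heq : f (aN n x) = tradeoff P₂ Q₂ ((k n x : ℝ)/2^n) := by
          rw [hf_eq _ (haN_nonneg n x)]
        rw [heq]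
        exact le_of_lt this
      have h3 : ∫ x, (f (aN n x) + ε/2) ∂Q₁ = (∫ x, f (aN n x) ∂Q₁) + ε/2 := by
        rw [integral_add (integrable_test (haN_meas n) fun x => hf_Icc _) (integrable_const _)]
        simp
      linarith
    linarith
  -- dominated convergence
  have hptw : ∀ x, Tendsto (fun n => f (aN n x)) atTop (nhds (f (a x))) := by
    intro x
    rcases eq_or_lt_of_le (ha_Icc x).1 with h0 | hpos
    · have heq : (fun n => f (aN n x)) = fun _ => f (a x) :=
        funext fun n => by rw [haN_zero n x h0.symm, ← h0]
      rw [heq]; exact tendsto_const_nhds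
    · have hhalf : Tendsto (fun n : ℕ => ((1:ℝ)/2)^n) atTop (nhds 0) :=
        tendsto_pow_atTop_nhds_zero_of_lt_one (by norm_num) (by norm_num)
      have hupper_t : Tendsto (fun n : ℕ => f (a x) + ((1:ℝ)/2)^n / a x) atTop
          (nhds (f (a x))) := by
        have h0 : Tendsto (fun n : ℕ => ((1:ℝ)/2)^n / a x) atTop (nhds 0) := by
          simpa using hhalf.div_const (a x)
        simpa using h0.const_add (f (a x))
      refine tendsto_of_tendsto_of_tendsto_of_le_of_le' tendsto_const_nhds hupper_t
        (Eventually.of_forall fun n => hf_anti (haN_le n x)) ?_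
      have hev : ∀ᶠ n : ℕ in atTop, ((1:ℝ)/2)^n < a x := hhalf.eventually_lt_const hpos
      filter_upwards [hev] with n hn
      have hposN : 0 < aN n x := by
        have := haN_lt n x
        linarith
      have hq := tradeoff_quant (P := P₂) (Q := Q₂) hposN (haN_le n x)
      have h1 : f (aN n x) = tradeoff P₂ Q₂ (aN n x) := hf_eq _ (haN_nonneg n x)
      have h2 : f (a x) = tradeoff P₂ Q₂ (a x) := hf_eq _ (ha_Icc x).1
      have h3 : 1 - aN n x / a x ≤ ((1:ℝ)/2)^n / a x := by
        have h4 : a x - aN n x ≤ ((1:ℝ)/2)^n := by linarith [haN_lt n x]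
        have h5 : 1 - aN n x / a x = (a x - aN n x) / a x := by field_simp
        rw [h5]
        gcongr
      rw [h1, h2] at *
      linarith
  have hDCT : Tendsto (fun n => ∫ x, f (aN n x) ∂Q₁) atTop (nhds (∫ x, f (a x) ∂Q₁)) := by
    refine tendsto_integral_of_dominated_convergence (fun _ => (1:ℝ))
      (fun n => (haN_meas n).aestronglyMeasurable) (integrable_const 1)
      (fun n => ae_of_all _ fun x => ?_) (ae_of_all _ hptw)
    have hfI := hf_Icc (aN n x)
    show ‖f (aN n x)‖ ≤ 1
    rw [Real.norm_eq_abs, abs_le]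
    exact ⟨by linarith [hfI.1], hfI.2⟩
  have hfinal : tradeoff (P₁.prod P₂) (Q₁.prod Q₂) α - ε/2 ≤ ∫ x, f (a x) ∂Q₁ :=
    ge_of_tendsto hDCT (Eventually.of_forall fun n => by linarith [claimA n])
  linarith

end Key

lemma tradeoff_prod_congr_right
    {Ω₁ Ω₂ Ω₂' : Type*} [MeasurableSpace Ω₁] [MeasurableSpace Ω₂] [MeasurableSpace Ω₂']
    (P₁ Q₁ : Measure Ω₁) [IsProbabilityMeasure P₁] [IsProbabilityMeasure Q₁]
    (P₂ Q₂ : Measure Ω₂) [IsProbabilityMeasure P₂] [IsProbabilityMeasure Q₂]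
    (P₂' Q₂' : Measure Ω₂') [IsProbabilityMeasure P₂'] [IsProbabilityMeasure Q₂']
    (h : ∀ t ∈ Set.Icc (0:ℝ) 1, tradeoff P₂ Q₂ t = tradeoff P₂' Q₂' t)
    {α : ℝ} (hα0 : 0 ≤ α) :
    tradeoff (P₁.prod P₂) (Q₁.prod Q₂) α = tradeoff (P₁.prod P₂') (Q₁.prod Q₂') α :=
  le_antisymm (tradeoff_prod_le P₁ Q₁ P₂ Q₂ P₂' Q₂' h hα0)
    (tradeoff_prod_le P₁ Q₁ P₂' Q₂' P₂ Q₂ (fun t ht => (h t ht).symm) hα0)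

/-- Well-definedness of composition: the tradeoff function of a product of
independent pairs depends only on the tradeoff functions of the individual pairs. -/
theorem tradeoff_prod_well_defined
    {Ω₁ Ω₂ Ω₁' Ω₂' : Type*} [MeasurableSpace Ω₁] [MeasurableSpace Ω₂]
    [MeasurableSpace Ω₁'] [MeasurableSpace Ω₂']
    (P₁ Q₁ : Measure Ω₁) [IsProbabilityMeasure P₁] [IsProbabilityMeasure Q₁]
    (P₂ Q₂ : Measure Ω₂) [IsProbabilityMeasure P₂] [IsProbabilityMeasure Q₂]
    (P₁' Q₁' : Measure Ω₁') [IsProbabilityMeasure P₁'] [IsProbabilityMeasure Q₁']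
    (P₂' Q₂' : Measure Ω₂') [IsProbabilityMeasure P₂'] [IsProbabilityMeasure Q₂']
    (h1 : ∀ α ∈ Set.Icc (0 : ℝ) 1, tradeoff P₁ Q₁ α = tradeoff P₁' Q₁' α)
    (h2 : ∀ α ∈ Set.Icc (0 : ℝ) 1, tradeoff P₂ Q₂ α = tradeoff P₂' Q₂' α) :
    ∀ α ∈ Set.Icc (0 : ℝ) 1,
      tradeoff (P₁.prod P₂) (Q₁.prod Q₂) α = tradeoff (P₁'.prod P₂') (Q₁'.prod Q₂') α := by
  intro α hα
  calc tradeoff (P₁.prod P₂) (Q₁.prod Q₂) α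
      = tradeoff (P₂.prod P₁) (Q₂.prod Q₁) α := tradeoff_prod_comm P₁ Q₁ P₂ Q₂ α
    _ = tradeoff (P₂.prod P₁') (Q₂.prod Q₁') α :=
        tradeoff_prod_congr_right P₂ Q₂ P₁ Q₁ P₁' Q₁' h1 hα.1
    _ = tradeoff (P₁'.prod P₂) (Q₁'.prod Q₂) α := tradeoff_prod_comm P₂ Q₂ P₁' Q₁' α
    _ = tradeoff (P₁'.prod P₂') (Q₁'.prod Q₂') α :=
        tradeoff_prod_congr_right P₁' Q₁' P₂ Q₂ P₂' Q₂' h2 hα.1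
end

section
/- (Subsampling/mixture) Let P and Q be probability measures on a measurable space Ω, let p ∈ (0,1), and let f = T(P‖Q). Then for every α ∈ [0,1], T(P ‖ (1−p)·P + p·Q)(α) = p·f(α) + (1−p)·(1−α). -/
open MeasureTheory ProbabilityTheory

section aux

variable {Ω : Type*} [MeasurableSpace Ω]

lemma integrable_of_mem_Icc {φ : Ω → ℝ} (hφ : Measurable φ)
    (h01 : ∀ x, φ x ∈ Set.Icc (0:ℝ) 1) (μ : Measure Ω) [IsFiniteMeasure μ] :
    Integrable φ μ := by
  refine (integrable_const (1:ℝ)).mono' hφ.aestronglyMeasurable ?_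
  filter_upwards with x
  rw [Real.norm_eq_abs, abs_le]
  exact ⟨by linarith [(h01 x).1], (h01 x).2⟩

lemma integral_mem_Icc {φ : Ω → ℝ} (hφ : Measurable φ)
    (h01 : ∀ x, φ x ∈ Set.Icc (0:ℝ) 1) (μ : Measure Ω) [IsProbabilityMeasure μ] :
    (∫ x, φ x ∂μ) ∈ Set.Icc (0:ℝ) 1 := by
  constructor
  · exact integral_nonneg fun x => (h01 x).1
  · calc ∫ x, φ x ∂μ ≤ ∫ _x, (1:ℝ) ∂μ :=
        integral_mono (integrable_of_mem_Icc hφ h01 μ) (integrable_const 1) fun x => (h01 x).2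
    _ = 1 := by simp

end aux

/-- Subsampling/mixture: for `p ∈ (0,1)` and `f = T(P‖Q)`,
`T(P ‖ (1−p)P + pQ)(α) = p f(α) + (1−p)(1−α)` on `[0,1]`. -/
theorem tradeoff_mixture {Ω : Type*} [MeasurableSpace Ω]
    (P Q : Measure Ω) [IsProbabilityMeasure P] [IsProbabilityMeasure Q]
    (p : ℝ) (hp : p ∈ Set.Ioo (0 : ℝ) 1) :
    ∀ α ∈ Set.Icc (0 : ℝ) 1,
      tradeoff P (ENNReal.ofReal (1 - p) • P + ENNReal.ofReal p • Q) α
        = p * tradeoff P Q α + (1 - p) * (1 - α) := by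
  intro α hα
  obtain ⟨hp0, hp1⟩ := hp
  obtain ⟨hα0, hα1⟩ := hα
  set M : Measure Ω := ENNReal.ofReal (1 - p) • P + ENNReal.ofReal p • Q with hM
  -- integral against the mixture
  have hmix : ∀ φ : Ω → ℝ, Measurable φ → (∀ x, φ x ∈ Set.Icc (0:ℝ) 1) →
      (∫ x, φ x ∂M) = (1 - p) * (∫ x, φ x ∂P) + p * (∫ x, φ x ∂Q) := by
    intro φ hφ h01
    have hIP : Integrable φ P := integrable_of_mem_Icc hφ h01 P
    have hIQ : Integrable φ Q := integrable_of_mem_Icc hφ h01 Q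
    rw [hM, integral_add_measure (hIP.smul_measure (by simp)) (hIQ.smul_measure (by simp)),
      integral_smul_measure, integral_smul_measure,
      ENNReal.toReal_ofReal (by linarith), ENNReal.toReal_ofReal hp0.le]
    simp [smul_eq_mul]
  -- the two feasible sets
  set SQ := { b : ℝ | ∃ φ : Ω → ℝ, Measurable φ ∧ (∀ x, φ x ∈ Set.Icc (0 : ℝ) 1) ∧
    (∫ x, φ x ∂P) ≤ α ∧ b = 1 - ∫ x, φ x ∂Q } with hSQ
  set SM := { b : ℝ | ∃ φ : Ω → ℝ, Measurable φ ∧ (∀ x, φ x ∈ Set.Icc (0 : ℝ) 1) ∧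
    (∫ x, φ x ∂P) ≤ α ∧ b = 1 - ∫ x, φ x ∂M } with hSM
  have htrQ : tradeoff P Q α = sInf SQ := rfl
  have htrM : tradeoff P M α = sInf SM := rfl
  have hconstmem : ∀ {μ : Measure Ω} [IsProbabilityMeasure μ],
      (1 - α) ∈ { b : ℝ | ∃ φ : Ω → ℝ, Measurable φ ∧ (∀ x, φ x ∈ Set.Icc (0 : ℝ) 1) ∧
        (∫ x, φ x ∂P) ≤ α ∧ b = 1 - ∫ x, φ x ∂μ } := by
    intro μ hμ
    exact ⟨fun _ => α, measurable_const, fun x => ⟨hα0, hα1⟩, by simp, by simp⟩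
  have hMprob : IsProbabilityMeasure M := by
    constructor
    rw [hM]
    simp [Measure.smul_apply, smul_eq_mul]
    rw [← ENNReal.ofReal_add (by linarith) hp0.le]
    norm_num
  have hSQne : SQ.Nonempty := ⟨1 - α, hconstmem⟩
  have hSMne : SM.Nonempty := ⟨1 - α, hconstmem⟩
  have hbddQ : BddBelow SQ := by
    refine ⟨0, fun b hb => ?_⟩
    obtain ⟨φ, hφ, h01, hP, rfl⟩ := hb
    linarith [(integral_mem_Icc hφ h01 Q).2]
  have hbddM : BddBelow SM := by
    refine ⟨0, fun b hb => ?_⟩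
    obtain ⟨φ, hφ, h01, hP, rfl⟩ := hb
    have := integral_mem_Icc (μ := M) hφ h01
    linarith [this.2]
  rw [htrQ, htrM]
  apply le_antisymm
  · -- upper bound: sInf SM ≤ target
    apply le_of_forall_pos_le_add
    intro ε hε
    have hεp : (0:ℝ) < ε / p := div_pos hε hp0
    obtain ⟨bq, hbq, hbqlt⟩ := exists_lt_of_csInf_lt hSQne (lt_add_of_pos_right (sInf SQ) hεp)
    obtain ⟨φ, hφ, h01, hP, rfl⟩ := hbq
    set a := ∫ x, φ x ∂P with ha
    have haI := integral_mem_Icc hφ h01 P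
    have hqI := integral_mem_Icc hφ h01 Q
    set t := (α - a) / (1 - a) with ht
    have ht0 : 0 ≤ t := div_nonneg (by linarith) (by linarith [haI.2])
    have ht1 : t ≤ 1 := by
      rcases lt_or_eq_of_le haI.2 with h | h
      · rw [ht, div_le_one (by linarith)]; linarith
      · have hz : (1:ℝ) - a = 0 := by rw [ha, ← h]; ring
        rw [ht, hz, div_zero]; norm_num
    set ψ : Ω → ℝ := fun x => φ x + t * (1 - φ x) with hψ
    have hψm : Measurable ψ := by
      apply Measurable.add hφ
      exact (measurable_const.sub hφ).const_mul t
    have hψ01 : ∀ x, ψ x ∈ Set.Icc (0:ℝ) 1 := by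
      intro x
      obtain ⟨h1, h2⟩ := h01 x
      constructor
      · simp only [hψ]; nlinarith
      · simp only [hψ]; nlinarith
    have hψint : ∀ (μ : Measure Ω) [IsProbabilityMeasure μ],
        (∫ x, ψ x ∂μ) = (∫ x, φ x ∂μ) + t * (1 - ∫ x, φ x ∂μ) := by
      intro μ hμ
      have hIφ : Integrable φ μ := integrable_of_mem_Icc hφ h01 μ
      have hI2 : Integrable (fun x => t * (1 - φ x)) μ :=
        ((integrable_const 1).sub hIφ).const_mul t
      rw [hψ, integral_add hIφ hI2, integral_const_mul, integral_sub (integrable_const 1) hIφ]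
      simp
    have hψP : (∫ x, ψ x ∂P) = α := by
      rw [hψint P, ← ha]
      rcases lt_or_eq_of_le haI.2 with h | h
      · rw [ht, div_mul_cancel₀ _ (by rw [ha]; intro hc; linarith [sub_eq_zero.mp hc] : (1:ℝ) - a ≠ 0)]
        ring
      · have hz : (1:ℝ) - a = 0 := by rw [ha, ← h]; ring
        have ha1 : a = 1 := by linarith
        rw [ht, hz, div_zero]
        rw [ha1]; linarith
    have hψQ : (∫ x, φ x ∂Q) ≤ ∫ x, ψ x ∂Q := by
      rw [hψint Q]
      nlinarith [hqI.2]
    have hmem : (1 - ∫ x, ψ x ∂M) ∈ SM := ⟨ψ, hψm, hψ01, hψP.le, rfl⟩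
    have hle : sInf SM ≤ 1 - ∫ x, ψ x ∂M := csInf_le hbddM hmem
    rw [hmix ψ hψm hψ01, hψP] at hle
    have : p * (1 - ∫ x, ψ x ∂Q) ≤ p * (sInf SQ + ε / p) := by
      apply mul_le_mul_of_nonneg_left _ hp0.le
      linarith
    rw [mul_add, mul_div_cancel₀ _ (ne_of_gt hp0)] at this
    nlinarith
  · -- lower bound
    apply le_csInf hSMne
    intro b hb
    obtain ⟨φ, hφ, h01, hP, rfl⟩ := hb
    have hQmem : (1 - ∫ x, φ x ∂Q) ∈ SQ := ⟨φ, hφ, h01, hP, rfl⟩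
    have h1 : sInf SQ ≤ 1 - ∫ x, φ x ∂Q := csInf_le hbddQ hQmem
    rw [hmix φ hφ h01]
    nlinarith
end

section
/- (Neyman–Pearson parametrization of the tradeoff function) Let P and Q be probability measures on a measurable space Ω such that Q is absolutely continuous with respect to P, and let h = dQ/dP be the Radon–Nikodym derivative. Assume the pushforward of P under h is atomless, i.e., P({x : h(x) = t}) = 0 for every t ∈ ℝ. For t ≥ 0 define α(t) = P({x : h(x) ≥ t}) and β(t) = Q({x : h(x) < t}). Then T(P‖Q)(α(t)) = β(t) for every t ≥ 0; that is, the infimum defining the tradeoff function is attained by the likelihood-ratio threshold tests. -/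
open MeasureTheory ProbabilityTheory
open scoped NNReal ENNReal

/-- Neyman–Pearson parametrization: if `Q` has density `h = dQ/dP` w.r.t. `P`
and the law of `h` under `P` is atomless, then with `α(t) = P(h ≥ t)` and `β(t) = Q(h < t)`
we have `T(P‖Q)(α(t)) = β(t)` for all `t ≥ 0`. -/
theorem tradeoff_neyman_pearson {Ω : Type*} [MeasurableSpace Ω]
    (P Q : Measure Ω) [IsProbabilityMeasure P] [IsProbabilityMeasure Q]
    (h : Ω → ℝ) (hh : Measurable h)
    (hdens : Q = P.withDensity fun x => ENNReal.ofReal (h x))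
    (hatomless : ∀ t : ℝ, P {x | h x = t} = 0) :
    ∀ t : ℝ, 0 ≤ t →
      tradeoff P Q (P {x | t ≤ h x}).toReal = (Q {x | h x < t}).toReal := by
  intro t ht
  set s : Set Ω := {x | t ≤ h x} with hs_def
  have hs : MeasurableSet s := measurableSet_le measurable_const hh
  have hsc : {x | h x < t} = sᶜ := by ext x; simp [s, not_le]
  set g : Ω → ℝ := fun x => max (h x) 0 with hg_def
  have hg_meas : Measurable g := hh.max measurable_const
  have hg_nonneg : ∀ x, 0 ≤ g x := fun x => le_max_right _ _
  -- integral under Q is a weighted integral under P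
  have key : ∀ φ : Ω → ℝ, ∫ x, φ x ∂Q = ∫ x, g x * φ x ∂P := by
    intro φ
    rw [hdens]
    rw [show (fun x => ENNReal.ofReal (h x)) = fun x => (((h x).toNNReal : ℝ≥0) : ℝ≥0∞)
      from rfl]
    rw [integral_withDensity_eq_integral_smul hh.real_toNNReal]
    have hx : ∀ x, ((h x).toNNReal : ℝ≥0) • φ x = g x * φ x := by
      intro x
      simp [NNReal.smul_def, Real.coe_toNNReal', g]
    simp_rw [hx]
  -- g is integrable
  have hg_lint : ∫⁻ x, ENNReal.ofReal (g x) ∂P = 1 := by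
    have h1 : ∀ x, ENNReal.ofReal (g x) = ENNReal.ofReal (h x) := by
      intro x
      rcases le_or_gt 0 (h x) with hx | hx
      · simp [g, max_eq_left hx]
      · simp [g, max_eq_right hx.le, ENNReal.ofReal_of_nonpos hx.le]
    simp_rw [h1]
    have : Q Set.univ = ∫⁻ x, ENNReal.ofReal (h x) ∂P := by
      rw [hdens, withDensity_apply _ MeasurableSet.univ, setLIntegral_univ]
    rw [← this, measure_univ]
  have hg_int : Integrable g P := by
    refine ⟨hg_meas.aestronglyMeasurable, ?_⟩
    rw [hasFiniteIntegral_iff_ofReal (ae_of_all _ hg_nonneg), hg_lint]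
    exact ENNReal.one_lt_top
  -- bounded measurable functions are integrable
  have hbdd_int : ∀ φ : Ω → ℝ, Measurable φ → (∀ x, φ x ∈ Set.Icc (0 : ℝ) 1) →
      Integrable φ P := by
    intro φ hm h01
    refine Integrable.mono' (integrable_const 1) hm.aestronglyMeasurable ?_
    filter_upwards with x
    rw [Real.norm_eq_abs, abs_of_nonneg (h01 x).1]
    exact (h01 x).2
  have hprod_int : ∀ φ : Ω → ℝ, Measurable φ → (∀ x, φ x ∈ Set.Icc (0 : ℝ) 1) →
      Integrable (fun x => g x * φ x) P := by
    intro φ hm h01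
    refine Integrable.mono' hg_int (hg_meas.mul hm).aestronglyMeasurable ?_
    filter_upwards with x
    rw [Real.norm_eq_abs, abs_of_nonneg (mul_nonneg (hg_nonneg x) (h01 x).1)]
    calc g x * φ x ≤ g x * 1 := by
          exact mul_le_mul_of_nonneg_left (h01 x).2 (hg_nonneg x)
      _ = g x := mul_one _
  -- the threshold test
  set ind : Ω → ℝ := s.indicator 1 with hind_def
  have hind_meas : Measurable ind := (measurable_one.indicator hs)
  have hind01 : ∀ x, ind x ∈ Set.Icc (0 : ℝ) 1 := by
    intro x
    by_cases hx : x ∈ s <;> simp [ind, hx]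
  have hindP : ∫ x, ind x ∂P = (P s).toReal := by
    simpa [ind, measureReal_def] using integral_indicator_one (μ := P) hs
  have hindQ : ∫ x, ind x ∂Q = (Q s).toReal := by
    simpa [ind, measureReal_def] using integral_indicator_one (μ := Q) hs
  -- complement identity
  have hcompl : (Q sᶜ).toReal = 1 - (Q s).toReal := by
    rw [measure_compl hs (measure_ne_top _ _), measure_univ,
      ENNReal.toReal_sub_of_le prob_le_one ENNReal.one_ne_top, ENNReal.toReal_one]
  -- Neyman–Pearson inequality
  have main : ∀ φ : Ω → ℝ, Measurable φ → (∀ x, φ x ∈ Set.Icc (0 : ℝ) 1) →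
      (∫ x, φ x ∂P) ≤ (P s).toReal → ∫ x, φ x ∂Q ≤ (Q s).toReal := by
    intro φ hm h01 hP
    have hiφ := hprod_int φ hm h01
    have hiind := hprod_int ind hind_meas hind01
    have hiφ' := hbdd_int φ hm h01
    have hiind' := hbdd_int ind hind_meas hind01
    have hpt : ∀ x, g x * φ x - g x * ind x ≤ t * φ x - t * ind x := by
      intro x
      by_cases hx : x ∈ s
      · have hhx : t ≤ h x := hx
        have hgx : g x = h x := max_eq_left (le_trans ht hhx)
        have : ind x = 1 := by simp [ind, hx]
        rw [this, hgx]
        nlinarith [(h01 x).1, (h01 x).2, hhx]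
      · have hhx : h x < t := by simpa [s, not_le] using hx
        have hgx : g x ≤ t := max_le hhx.le ht
        have : ind x = 0 := by simp [ind, hx]
        rw [this]
        nlinarith [(h01 x).1, hg_nonneg x]
    have hineq : ∫ x, (g x * φ x - g x * ind x) ∂P ≤ ∫ x, (t * φ x - t * ind x) ∂P := by
      refine integral_mono (hiφ.sub hiind) ((hiφ'.const_mul t).sub (hiind'.const_mul t)) ?_
      intro x; exact hpt x
    rw [integral_sub hiφ hiind, integral_sub (hiφ'.const_mul t) (hiind'.const_mul t),
      integral_const_mul, integral_const_mul, hindP] at hineq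
    have ht2 : t * (∫ x, φ x ∂P) - t * (P s).toReal ≤ 0 := by
      have := mul_le_mul_of_nonneg_left hP ht
      linarith
    have h3 : ∫ x, g x * ind x ∂P = (Q s).toReal := by rw [← key ind]; exact hindQ
    rw [key φ]
    linarith [hineq, ht2, h3]
  -- membership and lower bound for the sInf
  set S : Set ℝ := { b : ℝ | ∃ φ : Ω → ℝ, Measurable φ ∧ (∀ x, φ x ∈ Set.Icc (0 : ℝ) 1) ∧
    (∫ x, φ x ∂P) ≤ (P s).toReal ∧ b = 1 - ∫ x, φ x ∂Q } with hS_def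
  have hmem : (Q sᶜ).toReal ∈ S := by
    refine ⟨ind, hind_meas, hind01, le_of_eq hindP, ?_⟩
    rw [hindQ, hcompl]
  have hlb : ∀ b ∈ S, (Q sᶜ).toReal ≤ b := by
    rintro b ⟨φ, hm, h01, hP, rfl⟩
    have := main φ hm h01 hP
    rw [hcompl]
    linarith
  rw [hsc]
  exact le_antisymm (csInf_le ⟨_, hlb⟩ hmem) (le_csInf ⟨_, hmem⟩ hlb)
end

section
/- (Duality between f-DP and (ε,δ)-DP, one tangent line) Let P and Q be probability measures on a measurable space Ω and let f : [0,1] → [0,1] be a convex function with T(P‖Q) ⪰ f (pointwise). Suppose f is differentiable at a point α ∈ [0,1] with f'(α) ≤ −1, and set ε = log(−f'(α)) and δ = 1 − f(α) + α·f'(α). Then for every measurable set S ⊆ Ω, Q(S) ≤ e^ε · P(S) + δ. -/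
open MeasureTheory ProbabilityTheory

/-- Duality between f-DP and (ε,δ)-DP, one tangent line: if `T(P‖Q) ⪰ f` with
`f` convex on `[0,1]`, differentiable at `α` with `f'(α) ≤ −1`, then with
`ε = log(−f'(α))` and `δ = 1 − f(α) + α f'(α)` every measurable `S` satisfies
`Q(S) ≤ e^ε P(S) + δ`. -/
theorem tradeoff_duality_tangent {Ω : Type*} [MeasurableSpace Ω]
    (P Q : Measure Ω) [IsProbabilityMeasure P] [IsProbabilityMeasure Q]
    (f : ℝ → ℝ) (hconv : ConvexOn ℝ (Set.Icc 0 1) f)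
    (hfDP : ∀ α ∈ Set.Icc (0 : ℝ) 1, f α ≤ tradeoff P Q α)
    (α s : ℝ) (hα : α ∈ Set.Icc (0 : ℝ) 1) (hderiv : HasDerivAt f s α) (hs : s ≤ -1) :
    ∀ S : Set Ω, MeasurableSet S →
      (Q S).toReal ≤ Real.exp (Real.log (-s)) * (P S).toReal + (1 - f α + α * s) := by
  intro S hS
  have hspos : (0:ℝ) < -s := by linarith
  rw [Real.exp_log hspos]
  set a : ℝ := (P S).toReal with ha_def
  have haI : a ∈ Set.Icc (0:ℝ) 1 := by
    constructor
    · exact ENNReal.toReal_nonneg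
    · have h1 : P S ≤ 1 := prob_le_one
      calc a ≤ (1 : ENNReal).toReal := ENNReal.toReal_mono (by simp) h1
        _ = 1 := by simp
  -- the indicator of S as a test function
  set φ : Ω → ℝ := S.indicator (fun _ => 1) with hφ_def
  have hφm : Measurable φ := measurable_const.indicator hS
  have hφmem : ∀ x, φ x ∈ Set.Icc (0:ℝ) 1 := by
    intro x
    by_cases hx : x ∈ S <;> simp [hφ_def, Set.indicator_apply, hx]
  have hintP : (∫ x, φ x ∂P) = a := by
    rw [hφ_def, ha_def]
    simp [integral_indicator hS, measureReal_def]
  have hintQ : (∫ x, φ x ∂Q) = (Q S).toReal := by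
    rw [hφ_def]
    simp [integral_indicator hS, measureReal_def]
  -- the defining set is bounded below by 0
  have hbdd : BddBelow { b : ℝ | ∃ ψ : Ω → ℝ, Measurable ψ ∧
      (∀ x, ψ x ∈ Set.Icc (0 : ℝ) 1) ∧ (∫ x, ψ x ∂P) ≤ a ∧ b = 1 - ∫ x, ψ x ∂Q } := by
    refine ⟨0, ?_⟩
    rintro b ⟨ψ, hψm, hψmem, -, rfl⟩
    have hint : Integrable ψ Q := by
      refine (integrable_const (1:ℝ)).mono' hψm.aestronglyMeasurable ?_
      filter_upwards with x
      rw [Real.norm_eq_abs, abs_le]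
      exact ⟨by linarith [(hψmem x).1], (hψmem x).2⟩
    have : (∫ x, ψ x ∂Q) ≤ ∫ _, (1:ℝ) ∂Q :=
      integral_mono hint (integrable_const 1) (fun x => (hψmem x).2)
    simp only [integral_const, measureReal_def, measure_univ, ENNReal.toReal_one, smul_eq_mul, one_mul] at this
    linarith
  have htr : tradeoff P Q a ≤ 1 - (Q S).toReal := by
    apply csInf_le hbdd
    exact ⟨φ, hφm, hφmem, le_of_eq hintP, by rw [hintQ]⟩
  -- tangent line below f on [0,1]
  have htangent : f α + s * (a - α) ≤ f a := by
    rcases lt_trichotomy a α with h | h | h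
    · have := hconv.slope_le_of_hasDerivAt haI hα h hderiv
      rw [slope_def_field] at this
      rw [div_le_iff₀ (by linarith)] at this
      nlinarith
    · simp [h]
    · have := hconv.le_slope_of_hasDerivAt hα haI h hderiv
      rw [slope_def_field] at this
      rw [le_div_iff₀ (by linarith)] at this
      nlinarith
  have hfa := hfDP a haI
  have : f α + s * (a - α) ≤ 1 - (Q S).toReal := le_trans htangent (le_trans hfa htr)
  nlinarith
end

section
/- Let Z be a real random variable with Z > 0 almost surely and let G be a standard normal random variable independent of Z. Let P be the law of the pair (Z, G) on ℝ² and let Q be the law of the pair (Z, Z + G) on ℝ². For t ∈ ℝ define α(t) = E[Φ(−t/Z − Z/2)] and β(t) = E[Φ(t/Z − Z/2)], where Φ is the standard normal CDF. Then the tradeoff function f = T(P‖Q) satisfies f(α(t)) = β(t) for every t ∈ ℝ. -/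
open MeasureTheory ProbabilityTheory Set
open scoped NNReal ENNReal

/-- The standard normal CDF `Φ(x) = (1/√(2π)) ∫_{−∞}^x e^{−u²/2} du`. -/
noncomputable def stdGaussianCDF (x : ℝ) : ℝ :=
  (1 / Real.sqrt (2 * Real.pi)) * ∫ u in Set.Iic x, Real.exp (-u ^ 2 / 2)

lemma stdGaussianCDF_eq_cdf : stdGaussianCDF = cdf (gaussianReal 0 1) := by
  funext x
  rw [cdf_eq_real, measureReal_def, gaussianReal_apply_eq_integral 0 one_ne_zero,
    ENNReal.toReal_ofReal (integral_nonneg fun u => gaussianPDFReal_nonneg _ _ _)]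
  unfold stdGaussianCDF gaussianPDFReal
  rw [integral_const_mul]
  norm_num

lemma measurable_stdGaussianCDF : Measurable stdGaussianCDF := by
  rw [stdGaussianCDF_eq_cdf]; exact (cdf _).mono.measurable

lemma stdGaussianCDF_nonneg (x : ℝ) : 0 ≤ stdGaussianCDF x := by
  rw [stdGaussianCDF_eq_cdf]; exact cdf_nonneg _ x

lemma stdGaussianCDF_le_one (x : ℝ) : stdGaussianCDF x ≤ 1 := by
  rw [stdGaussianCDF_eq_cdf]; exact cdf_le_one _ x

lemma stdGaussianCDF_neg (x : ℝ) : stdGaussianCDF (-x) = 1 - stdGaussianCDF x := by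
  have hInt : Integrable (fun u : ℝ => Real.exp (-u ^ 2 / 2)) := by
    have := integrable_exp_neg_mul_sq (b := (1/2 : ℝ)) (by norm_num)
    convert this using 2 with u
    ring_nf
  have h1 : ∫ u in Set.Iic (-x), Real.exp (-u ^ 2 / 2)
      = ∫ u in Set.Ioi x, Real.exp (-u ^ 2 / 2) := by
    have := integral_comp_neg_Iic (-x) (fun u : ℝ => Real.exp (-u ^ 2 / 2))
    simp only [neg_neg] at this
    rw [← this]
    congr 1 with u
    ring_nf
  have h2 : (∫ u in Set.Iic x, Real.exp (-u ^ 2 / 2))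
      + ∫ u in Set.Ioi x, Real.exp (-u ^ 2 / 2) = Real.sqrt (2 * Real.pi) := by
    rw [intervalIntegral.integral_Iic_add_Ioi hInt.integrableOn hInt.integrableOn]
    have := integral_gaussian (1/2 : ℝ)
    simp only [one_div] at this ⊢
    rw [show (fun u : ℝ => Real.exp (-u ^ 2 / 2)) = fun u : ℝ => Real.exp (-((2:ℝ)⁻¹) * u ^ 2) by
      funext u; ring_nf, this]
    congr 1
    field_simp
  have hpi : Real.sqrt (2 * Real.pi) ≠ 0 := by positivity
  unfold stdGaussianCDF
  rw [h1, eq_sub_iff_add_eq, ← mul_add, add_comm, h2, one_div, inv_mul_cancel₀ hpi]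

lemma gauss_Iic (x : ℝ) :
    gaussianReal 0 1 (Set.Iic x) = ENNReal.ofReal (stdGaussianCDF x) := by
  rw [stdGaussianCDF_eq_cdf, ofReal_cdf]

lemma gauss_Ici (x : ℝ) :
    gaussianReal 0 1 (Set.Ici x) = ENNReal.ofReal (stdGaussianCDF (-x)) := by
  have hsing : gaussianReal 0 1 {x} = 0 :=
    gaussianReal_absolutelyContinuous 0 one_ne_zero (measure_singleton x)
  have hIoi : gaussianReal 0 1 (Set.Ici x) = gaussianReal 0 1 (Set.Ioi x) := by
    refine le_antisymm ?_ (measure_mono Set.Ioi_subset_Ici_self)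
    calc gaussianReal 0 1 (Set.Ici x) = gaussianReal 0 1 ({x} ∪ Set.Ioi x) := by
          rw [Set.singleton_union, Set.Ioi_insert]
      _ ≤ gaussianReal 0 1 {x} + gaussianReal 0 1 (Set.Ioi x) := measure_union_le _ _
      _ = gaussianReal 0 1 (Set.Ioi x) := by rw [hsing, zero_add]
  have hcompl : gaussianReal 0 1 (Set.Ioi x) = 1 - gaussianReal 0 1 (Set.Iic x) := by
    rw [← Set.compl_Iic, measure_compl measurableSet_Iic (measure_ne_top _ _), measure_univ]
  rw [hIoi, hcompl, gauss_Iic, stdGaussianCDF_neg,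
    ENNReal.ofReal_sub _ (stdGaussianCDF_nonneg x), ENNReal.ofReal_one]

lemma gauss_shift (z : ℝ) :
    gaussianReal z 1 = (gaussianReal 0 1).withDensity
      (fun y => ENNReal.ofReal (Real.exp (z * y - z ^ 2 / 2))) := by
  rw [gaussianReal_of_var_ne_zero z one_ne_zero, gaussianReal_of_var_ne_zero 0 one_ne_zero,
    ← withDensity_mul _ (measurable_gaussianPDF _ _)
      (by fun_prop)]
  congr 1
  funext y
  simp only [gaussianPDF_def, Pi.mul_apply,
    ← ENNReal.ofReal_mul (gaussianPDFReal_nonneg _ _ _)]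
  congr 1
  unfold gaussianPDFReal
  norm_num
  rw [mul_assoc ((Real.sqrt Real.pi)⁻¹ * (Real.sqrt 2)⁻¹), ← Real.exp_add]
  congr 1
  ring

lemma measurable_expL : Measurable fun p : ℝ × ℝ => ENNReal.ofReal (Real.exp (p.1 * p.2 - p.1 ^ 2 / 2)) := by
  fun_prop

lemma density_Q (ν : Measure ℝ) [SFinite ν] :
    (ν.prod (gaussianReal 0 1)).map (fun p : ℝ × ℝ => (p.1, p.1 + p.2))
      = (ν.prod (gaussianReal 0 1)).withDensity
          (fun p => ENNReal.ofReal (Real.exp (p.1 * p.2 - p.1 ^ 2 / 2))) := by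
  have hT : Measurable (fun p : ℝ × ℝ => (p.1, p.1 + p.2)) := by fun_prop
  ext s hs
  rw [Measure.map_apply hT hs, withDensity_apply _ hs, Measure.prod_apply (hT hs),
    ← lintegral_indicator hs _, lintegral_prod _
      (measurable_expL.indicator hs).aemeasurable]
  refine lintegral_congr fun z => ?_
  have hsec : MeasurableSet {x : ℝ | (z, x) ∈ s} := measurable_prodMk_left hs
  have hind : ∀ x : ℝ, s.indicator (fun p : ℝ × ℝ => ENNReal.ofReal (Real.exp (p.1 * p.2 - p.1 ^ 2 / 2))) (z, x)
      = ({x : ℝ | (z, x) ∈ s}).indicator (fun x => ENNReal.ofReal (Real.exp (z * x - z ^ 2 / 2))) x := by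
    intro x
    rfl
  simp_rw [hind]
  rw [lintegral_indicator hsec _, ← withDensity_apply _ hsec, ← gauss_shift z]
  have hmap : gaussianReal z 1 = (gaussianReal 0 1).map (· + z) := by
    rw [gaussianReal_map_add_const, zero_add]
  rw [hmap, Measure.map_apply (by fun_prop) hsec]
  congr 1
  ext x
  simp [add_comm]

lemma integrable_bdd {α : Type*} [MeasurableSpace α] (ν : Measure α) [IsProbabilityMeasure ν] (f : α → ℝ) (hf : Measurable f)
    (h0 : ∀ x, 0 ≤ f x) (h1 : ∀ x, f x ≤ 1) : Integrable f ν := by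
  refine Integrable.mono' (integrable_const 1) hf.aestronglyMeasurable
    (Filter.Eventually.of_forall fun x => ?_)
  rw [Real.norm_eq_abs, abs_le]
  exact ⟨by linarith [h0 x], h1 x⟩

lemma lint_toReal (ν : Measure ℝ) [IsProbabilityMeasure ν] (f : ℝ → ℝ) (hf : Measurable f)
    (h0 : ∀ x, 0 ≤ f x) (h1 : ∀ x, f x ≤ 1) :
    (∫⁻ z, ENNReal.ofReal (f z) ∂ν).toReal = ∫ z, f z ∂ν := by
  rw [← ofReal_integral_eq_lintegral_ofReal (integrable_bdd ν f hf h0 h1)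
    (Filter.Eventually.of_forall h0), ENNReal.toReal_ofReal (integral_nonneg h0)]

lemma measurable_phi1 (t : ℝ) : Measurable fun z : ℝ => stdGaussianCDF (-(t / z) - z / 2) :=
  measurable_stdGaussianCDF.comp (by fun_prop)

lemma measurable_phi2 (t : ℝ) : Measurable fun z : ℝ => stdGaussianCDF (z / 2 - t / z) :=
  measurable_stdGaussianCDF.comp (by fun_prop)

lemma measurableSet_S (t : ℝ) : MeasurableSet {p : ℝ × ℝ | t ≤ p.1 * p.2 - p.1 ^ 2 / 2} :=
  measurableSet_le measurable_const (by fun_prop)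

lemma measure_S (ν : Measure ℝ) [SFinite ν] (hν : ∀ᵐ z ∂ν, 0 < z) (t : ℝ) :
    (ν.prod (gaussianReal 0 1)) {p : ℝ × ℝ | t ≤ p.1 * p.2 - p.1 ^ 2 / 2}
      = ∫⁻ z, ENNReal.ofReal (stdGaussianCDF (-(t / z) - z / 2)) ∂ν := by
  rw [Measure.prod_apply (measurableSet_S t)]
  refine lintegral_congr_ae (hν.mono fun z hz => ?_)
  have hset : (Prod.mk z ⁻¹' {p : ℝ × ℝ | t ≤ p.1 * p.2 - p.1 ^ 2 / 2})
      = Set.Ici ((t + z ^ 2 / 2) / z) := by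
    ext x
    simp only [Set.mem_preimage, Set.mem_setOf_eq, Set.mem_Ici]
    rw [div_le_iff₀ hz]
    constructor <;> intro h <;> nlinarith
  dsimp only
  rw [hset, gauss_Ici]
  congr 2
  field_simp
  ring

lemma measure_SQ (ν : Measure ℝ) [SFinite ν] (hν : ∀ᵐ z ∂ν, 0 < z) (t : ℝ) :
    (ν.prod (gaussianReal 0 1))
        ((fun p : ℝ × ℝ => (p.1, p.1 + p.2)) ⁻¹' {p : ℝ × ℝ | t ≤ p.1 * p.2 - p.1 ^ 2 / 2})
      = ∫⁻ z, ENNReal.ofReal (stdGaussianCDF (z / 2 - t / z)) ∂ν := by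
  have hT : Measurable (fun p : ℝ × ℝ => (p.1, p.1 + p.2)) := by fun_prop
  rw [Measure.prod_apply (hT (measurableSet_S t))]
  refine lintegral_congr_ae (hν.mono fun z hz => ?_)
  have hset : (Prod.mk z ⁻¹'
        ((fun p : ℝ × ℝ => (p.1, p.1 + p.2)) ⁻¹' {p : ℝ × ℝ | t ≤ p.1 * p.2 - p.1 ^ 2 / 2}))
      = Set.Ici ((t - z ^ 2 / 2) / z) := by
    ext x
    simp only [Set.mem_preimage, Set.mem_setOf_eq, Set.mem_Ici]
    rw [div_le_iff₀ hz]
    constructor <;> intro h <;> nlinarith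
  dsimp only
  rw [hset, gauss_Ici]
  congr 2
  field_simp
  ring

lemma integral_Q (ν : Measure ℝ) [SFinite ν] (g : ℝ × ℝ → ℝ) :
    ∫ p, g p ∂((ν.prod (gaussianReal 0 1)).map (fun p : ℝ × ℝ => (p.1, p.1 + p.2)))
      = ∫ p, Real.exp (p.1 * p.2 - p.1 ^ 2 / 2) * g p ∂(ν.prod (gaussianReal 0 1)) := by
  rw [density_Q]
  have hfun : (fun p : ℝ × ℝ => ENNReal.ofReal (Real.exp (p.1 * p.2 - p.1 ^ 2 / 2)))
      = fun p : ℝ × ℝ =>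
        ((Real.toNNReal (Real.exp (p.1 * p.2 - p.1 ^ 2 / 2)) : ℝ≥0) : ℝ≥0∞) := rfl
  rw [hfun, integral_withDensity_eq_integral_smul (by fun_prop) g]
  refine integral_congr_ae (Filter.Eventually.of_forall fun p => ?_)
  dsimp only
  rw [NNReal.smul_def, Real.coe_toNNReal _ (Real.exp_nonneg _), smul_eq_mul]

lemma integrable_e (ν : Measure ℝ) [IsProbabilityMeasure ν] :
    Integrable (fun p : ℝ × ℝ => Real.exp (p.1 * p.2 - p.1 ^ 2 / 2))
      (ν.prod (gaussianReal 0 1)) := by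
  have hQprob : IsProbabilityMeasure
      ((ν.prod (gaussianReal 0 1)).map (fun p : ℝ × ℝ => (p.1, p.1 + p.2))) :=
    Measure.isProbabilityMeasure_map (by fun_prop)
  have h1 : ∫⁻ p, ENNReal.ofReal (Real.exp (p.1 * p.2 - p.1 ^ 2 / 2))
      ∂(ν.prod (gaussianReal 0 1)) = 1 := by
    have := density_Q ν
    calc ∫⁻ p, ENNReal.ofReal (Real.exp (p.1 * p.2 - p.1 ^ 2 / 2)) ∂(ν.prod (gaussianReal 0 1))
        = (ν.prod (gaussianReal 0 1)).withDensity
            (fun p => ENNReal.ofReal (Real.exp (p.1 * p.2 - p.1 ^ 2 / 2))) Set.univ := by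
          rw [withDensity_apply _ MeasurableSet.univ, Measure.restrict_univ]
      _ = 1 := by rw [← this]; exact measure_univ
  refine ⟨(by fun_prop : Measurable fun p : ℝ × ℝ =>
    Real.exp (p.1 * p.2 - p.1 ^ 2 / 2)).aestronglyMeasurable, ?_⟩
  rw [hasFiniteIntegral_iff_norm]
  have : ∀ p : ℝ × ℝ, ENNReal.ofReal ‖Real.exp (p.1 * p.2 - p.1 ^ 2 / 2)‖
      = ENNReal.ofReal (Real.exp (p.1 * p.2 - p.1 ^ 2 / 2)) := fun p => by
    rw [Real.norm_eq_abs, abs_of_nonneg (Real.exp_nonneg _)]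
  simp_rw [this, h1]
  exact ENNReal.one_lt_top

lemma NP (ν : Measure ℝ) [IsProbabilityMeasure ν] (t : ℝ) (φ : ℝ × ℝ → ℝ)
    (hφm : Measurable φ) (hφr : ∀ p, φ p ∈ Set.Icc (0 : ℝ) 1)
    (hφP : ∫ p, φ p ∂(ν.prod (gaussianReal 0 1))
      ≤ ∫ p, ({p : ℝ × ℝ | t ≤ p.1 * p.2 - p.1 ^ 2 / 2}).indicator 1 p
          ∂(ν.prod (gaussianReal 0 1))) :
    ∫ p, φ p ∂((ν.prod (gaussianReal 0 1)).map (fun p : ℝ × ℝ => (p.1, p.1 + p.2)))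
      ≤ ∫ p, ({p : ℝ × ℝ | t ≤ p.1 * p.2 - p.1 ^ 2 / 2}).indicator 1 p
          ∂((ν.prod (gaussianReal 0 1)).map (fun p : ℝ × ℝ => (p.1, p.1 + p.2))) := by
  set S := {p : ℝ × ℝ | t ≤ p.1 * p.2 - p.1 ^ 2 / 2} with hSdef
  set P := ν.prod (gaussianReal 0 1) with hPdef
  set ψ := S.indicator (1 : ℝ × ℝ → ℝ) with hψdef
  set e := fun p : ℝ × ℝ => Real.exp (p.1 * p.2 - p.1 ^ 2 / 2) with hedef
  set k := Real.exp t with hkdef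
  have hψm : Measurable ψ := measurable_one.indicator (measurableSet_S t)
  have hψr : ∀ p, ψ p ∈ Set.Icc (0 : ℝ) 1 := fun p => by
    by_cases h : p ∈ S <;> simp [hψdef, Set.indicator_apply, h]
  have hem : Measurable e := by fun_prop
  have hie : Integrable e P := integrable_e ν
  have iφ : Integrable φ P := integrable_bdd P φ hφm (fun p => (hφr p).1) (fun p => (hφr p).2)
  have iψ : Integrable ψ P := integrable_bdd P ψ hψm (fun p => (hψr p).1) (fun p => (hψr p).2)
  have bdd_mul : ∀ (g : ℝ × ℝ → ℝ), Measurable g → (∀ p, g p ∈ Set.Icc (0 : ℝ) 1) →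
      Integrable (fun p => g p * e p) P := by
    intro g hgm hgr
    refine hie.mono' ((hgm.mul hem).aestronglyMeasurable)
      (Filter.Eventually.of_forall fun p => ?_)
    rw [Real.norm_eq_abs, abs_mul, abs_of_nonneg (hgr p).1,
      abs_of_nonneg (Real.exp_nonneg _)]
    nlinarith [(hgr p).2, Real.exp_nonneg (p.1 * p.2 - p.1 ^ 2 / 2)]
  have iφe : Integrable (fun p => φ p * e p) P := bdd_mul φ hφm hφr
  have iψe : Integrable (fun p => ψ p * e p) P := bdd_mul ψ hψm hψr
  have hpt : ∀ p, (φ p - ψ p) * (e p - k) ≤ 0 := by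
    intro p
    by_cases h : p ∈ S
    · have h1 : ψ p = 1 := by simp [hψdef, Set.indicator_of_mem h]
      have h2 : k ≤ e p := Real.exp_le_exp.mpr h
      exact mul_nonpos_of_nonpos_of_nonneg (by linarith [(hφr p).2]) (by linarith)
    · have h1 : ψ p = 0 := by simp [hψdef, Set.indicator_of_notMem h]
      have h2 : e p ≤ k := Real.exp_le_exp.mpr (le_of_lt (lt_of_not_ge h))
      exact mul_nonpos_of_nonneg_of_nonpos (by linarith [(hφr p).1]) (by linarith)
  have hI : ∫ p, (φ p - ψ p) * (e p - k) ∂P ≤ 0 := integral_nonpos fun p => hpt p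
  have hexp : (fun p => (φ p - ψ p) * (e p - k))
      = fun p => (φ p * e p - ψ p * e p) - (k * φ p - k * ψ p) := by funext p; ring
  have i1 : Integrable (fun p => φ p * e p - ψ p * e p) P := iφe.sub iψe
  have i2 : Integrable (fun p => k * φ p - k * ψ p) P := (iφ.const_mul k).sub (iψ.const_mul k)
  rw [hexp, integral_sub i1 i2, integral_sub iφe iψe,
    integral_sub (iφ.const_mul k) (iψ.const_mul k),
    integral_const_mul, integral_const_mul] at hI
  have hk : (0 : ℝ) ≤ k := le_of_lt (Real.exp_pos t)
  have key : ∫ p, φ p * e p ∂P ≤ ∫ p, ψ p * e p ∂P := by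
    nlinarith [mul_nonneg hk (sub_nonneg.2 hφP)]
  have l1 : (fun p : ℝ × ℝ => Real.exp (p.1 * p.2 - p.1 ^ 2 / 2) * φ p)
      = fun p => φ p * e p := by funext p; rw [mul_comm]
  have l2 : (fun p : ℝ × ℝ => Real.exp (p.1 * p.2 - p.1 ^ 2 / 2) * ψ p)
      = fun p => ψ p * e p := by funext p; rw [mul_comm]
  rw [integral_Q ν φ, integral_Q ν ψ, l1, l2]
  exact key

lemma int_psi_P (ν : Measure ℝ) [IsProbabilityMeasure ν] (hν : ∀ᵐ z ∂ν, 0 < z) (t : ℝ) :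
    ∫ p, ({p : ℝ × ℝ | t ≤ p.1 * p.2 - p.1 ^ 2 / 2}).indicator 1 p ∂(ν.prod (gaussianReal 0 1))
      = ∫ z, stdGaussianCDF (-(t / z) - z / 2) ∂ν := by
  rw [integral_indicator_one (measurableSet_S t), measureReal_def, measure_S ν hν t,
    lint_toReal ν _ (measurable_phi1 t) (fun z => stdGaussianCDF_nonneg _)
      (fun z => stdGaussianCDF_le_one _)]

lemma int_psi_Q (ν : Measure ℝ) [IsProbabilityMeasure ν] (hν : ∀ᵐ z ∂ν, 0 < z) (t : ℝ) :
    ∫ p, ({p : ℝ × ℝ | t ≤ p.1 * p.2 - p.1 ^ 2 / 2}).indicator 1 p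
        ∂((ν.prod (gaussianReal 0 1)).map (fun p : ℝ × ℝ => (p.1, p.1 + p.2)))
      = ∫ z, stdGaussianCDF (z / 2 - t / z) ∂ν := by
  rw [integral_indicator_one (measurableSet_S t), measureReal_def,
    Measure.map_apply (by fun_prop) (measurableSet_S t), measure_SQ ν hν t,
    lint_toReal ν _ (measurable_phi2 t) (fun z => stdGaussianCDF_nonneg _)
      (fun z => stdGaussianCDF_le_one _)]

lemma tradeoff_eq_s12 (ν : Measure ℝ) [IsProbabilityMeasure ν] (hν : ∀ᵐ z ∂ν, 0 < z) (t : ℝ) :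
    tradeoff (ν.prod (gaussianReal 0 1))
        ((ν.prod (gaussianReal 0 1)).map (fun p : ℝ × ℝ => (p.1, p.1 + p.2)))
        (∫ z, stdGaussianCDF (-(t / z) - z / 2) ∂ν)
      = ∫ z, stdGaussianCDF (t / z - z / 2) ∂ν := by
  set S := {p : ℝ × ℝ | t ≤ p.1 * p.2 - p.1 ^ 2 / 2} with hSdef
  set B := ∫ z, stdGaussianCDF (t / z - z / 2) ∂ν with hBdef
  have hmeas3 : Measurable fun z : ℝ => stdGaussianCDF (t / z - z / 2) :=
    measurable_stdGaussianCDF.comp (by fun_prop)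
  have hBC : B = 1 - ∫ z, stdGaussianCDF (z / 2 - t / z) ∂ν := by
    have hfun : (fun z : ℝ => stdGaussianCDF (z / 2 - t / z))
        = fun z => 1 - stdGaussianCDF (t / z - z / 2) := by
      funext z
      rw [show z / 2 - t / z = -(t / z - z / 2) by ring, stdGaussianCDF_neg]
    rw [hfun, integral_sub (integrable_const 1)
      (integrable_bdd ν _ hmeas3 (fun z => stdGaussianCDF_nonneg _)
        (fun z => stdGaussianCDF_le_one _)), integral_const]
    simp [hBdef]
  have hψm : Measurable (S.indicator (1 : ℝ × ℝ → ℝ)) :=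
    measurable_one.indicator (measurableSet_S t)
  have hψr : ∀ p, S.indicator (1 : ℝ × ℝ → ℝ) p ∈ Set.Icc (0 : ℝ) 1 := fun p => by
    by_cases h : p ∈ S <;> simp [Set.indicator_apply, h]
  have hmem : B ∈ { b : ℝ | ∃ φ : ℝ × ℝ → ℝ, Measurable φ ∧
      (∀ x, φ x ∈ Set.Icc (0 : ℝ) 1) ∧
      (∫ x, φ x ∂(ν.prod (gaussianReal 0 1))) ≤ (∫ z, stdGaussianCDF (-(t / z) - z / 2) ∂ν) ∧
      b = 1 - ∫ x, φ x ∂((ν.prod (gaussianReal 0 1)).map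
        (fun p : ℝ × ℝ => (p.1, p.1 + p.2))) } := by
    refine ⟨S.indicator 1, hψm, hψr, le_of_eq (int_psi_P ν hν t), ?_⟩
    rw [int_psi_Q ν hν t, hBC]
  have hlb : ∀ b ∈ { b : ℝ | ∃ φ : ℝ × ℝ → ℝ, Measurable φ ∧
      (∀ x, φ x ∈ Set.Icc (0 : ℝ) 1) ∧
      (∫ x, φ x ∂(ν.prod (gaussianReal 0 1))) ≤ (∫ z, stdGaussianCDF (-(t / z) - z / 2) ∂ν) ∧
      b = 1 - ∫ x, φ x ∂((ν.prod (gaussianReal 0 1)).map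
        (fun p : ℝ × ℝ => (p.1, p.1 + p.2))) }, B ≤ b := by
    rintro b ⟨φ, hm, hr, hle, rfl⟩
    have hnp := NP ν t φ hm hr (hle.trans (le_of_eq (int_psi_P ν hν t).symm))
    rw [int_psi_Q ν hν t] at hnp
    rw [hBC]
    linarith
  simp only [tradeoff]
  exact le_antisymm (csInf_le ⟨B, hlb⟩ hmem) (le_csInf ⟨B, hmem⟩ hlb)
/-- with `P = law(Z, G)` and `Q = law(Z, Z + G)` (`G ~ N(0,1)` independent of
`Z > 0`), the tradeoff function `f = T(P‖Q)` satisfies `f(α(t)) = β(t)` where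
`α(t) = E[Φ(−t/Z − Z/2)]` and `β(t) = E[Φ(t/Z − Z/2)]`. -/
theorem tradeoff_gaussian_parametrization {Ω : Type*} [MeasurableSpace Ω]
    (μ : Measure Ω) [IsProbabilityMeasure μ]
    (Z G : Ω → ℝ) (hZ : Measurable Z) (hG : Measurable G)
    (hGlaw : μ.map G = gaussianReal 0 1) (hindep : IndepFun Z G μ)
    (hZpos : ∀ᵐ ω ∂μ, 0 < Z ω) :
    ∀ t : ℝ,
      tradeoff (μ.map fun ω => (Z ω, G ω)) (μ.map fun ω => (Z ω, Z ω + G ω))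
          (∫ ω, stdGaussianCDF (-(t / Z ω) - Z ω / 2) ∂μ)
        = ∫ ω, stdGaussianCDF (t / Z ω - Z ω / 2) ∂μ := by
  intro t
  have hT : Measurable (fun p : ℝ × ℝ => (p.1, p.1 + p.2)) := by fun_prop
  have hpair : Measurable fun ω => (Z ω, G ω) := hZ.prodMk hG
  set ν := μ.map Z with hνdef
  haveI : IsProbabilityMeasure ν := Measure.isProbabilityMeasure_map hZ.aemeasurable
  have hν : ∀ᵐ z ∂ν, 0 < z := by
    rw [hνdef]
    exact (MeasureTheory.ae_map_iff hZ.aemeasurable measurableSet_Ioi).2 hZpos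
  have hP : (μ.map fun ω => (Z ω, G ω)) = ν.prod (gaussianReal 0 1) := by
    rw [← hGlaw]
    exact (indepFun_iff_map_prod_eq_prod_map_map hZ.aemeasurable hG.aemeasurable).1 hindep
  have hQ : (μ.map fun ω => (Z ω, Z ω + G ω))
      = (ν.prod (gaussianReal 0 1)).map (fun p : ℝ × ℝ => (p.1, p.1 + p.2)) := by
    rw [← hP, Measure.map_map hT hpair]
    rfl
  have hμint1 : ∫ ω, stdGaussianCDF (-(t / Z ω) - Z ω / 2) ∂μ
      = ∫ z, stdGaussianCDF (-(t / z) - z / 2) ∂ν := by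
    rw [hνdef, integral_map hZ.aemeasurable (measurable_phi1 t).aestronglyMeasurable]
  have hμint2 : ∫ ω, stdGaussianCDF (t / Z ω - Z ω / 2) ∂μ
      = ∫ z, stdGaussianCDF (t / z - z / 2) ∂ν := by
    have hm3 : Measurable fun z : ℝ => stdGaussianCDF (t / z - z / 2) :=
      measurable_stdGaussianCDF.comp (by fun_prop)
    rw [hνdef, integral_map hZ.aemeasurable hm3.aestronglyMeasurable]
  rw [hP, hQ, hμint1, hμint2]
  exact tradeoff_eq_s12 ν hν t
end

section
/- (Gaussian coupling comparison) Let Z and Z̃ be real random variables such that there exists a coupling (Z, Z̃) on a common probability space with Z ≥ Z̃ ≥ 0 almost surely and Z > 0 almost surely. Let G be a standard normal random variable independent of (Z, Z̃). Then T( law(Z, Z + G) ‖ law(Z, G) ) ⪯ T( law(Z̃, Z̃ + G) ‖ law(Z̃, G) ), i.e., for every α ∈ [0,1] the tradeoff function of the pair built from Z is at most that of the pair built from Z̃. -/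
open MeasureTheory ProbabilityTheory Set Filter Real
open scoped ENNReal

noncomputable abbrev gm : Measure ℝ := gaussianReal 0 1

-- structure lemma for lower sets of ℝ
lemma lowerSet_cases {S : Set ℝ} (hlow : ∀ ⦃x y : ℝ⦄, x ≤ y → y ∈ S → x ∈ S) :
    S = ∅ ∨ S = univ ∨ (∃ t, S = Iic t) ∨ (∃ t, S = Iio t) := by
  by_cases h0 : S = ∅
  · exact Or.inl h0
  by_cases h1 : S = univ
  · exact Or.inr (Or.inl h1)
  obtain ⟨x0, hx0⟩ := Set.nonempty_iff_ne_empty.mpr h0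
  obtain ⟨x1, hx1⟩ : ∃ x, x ∉ S := by
    by_contra h
    push_neg at h
    exact h1 (Set.eq_univ_of_forall h)
  have hbdd : BddAbove S := by
    refine ⟨x1, fun g hg => ?_⟩
    by_contra hlt
    push_neg at hlt
    exact hx1 (hlow hlt.le hg)
  set t := sSup S with ht
  by_cases htS : t ∈ S
  · refine Or.inr (Or.inr (Or.inl ⟨t, ?_⟩))
    ext g
    exact ⟨fun hg => le_csSup hbdd hg, fun hg => hlow hg htS⟩
  · refine Or.inr (Or.inr (Or.inr ⟨t, ?_⟩))
    ext g
    constructor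
    · intro hg
      rcases lt_or_eq_of_le (le_csSup hbdd hg) with h | h
      · exact h
      · exfalso; exact htS (by rw [ht, ← h]; exact hg)
    · intro hg
      obtain ⟨s, hs, hgs⟩ := exists_lt_of_lt_csSup ⟨x0, hx0⟩ hg
      exact hlow hgs.le hs


instance : NullSingletonClass gm := by
  constructor
  intro x
  exact gaussianReal_absolutelyContinuous 0 one_ne_zero (measure_singleton x)

lemma Iio_eq_iUnion_Iic (t : ℝ) : Iio t = ⋃ n : ℕ, Iic (t - (1 / (n + 1) : ℝ)) := by
  ext x
  simp only [mem_Iio, mem_iUnion, mem_Iic]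
  constructor
  · intro hx
    obtain ⟨n, hn⟩ := exists_nat_one_div_lt (sub_pos.mpr hx)
    exact ⟨n, by push_cast at hn ⊢; linarith⟩
  · rintro ⟨n, hn⟩
    have : (0:ℝ) < 1 / ((n:ℝ) + 1) := by positivity
    linarith

-- K1
lemma measure_cdf_le {a : ℝ} (h0 : 0 ≤ a) (h1 : a ≤ 1) :
    gm {g | cdf gm g ≤ a} = ENNReal.ofReal a := by
  set S := {g | cdf gm g ≤ a} with hS
  have hlow : ∀ ⦃x y : ℝ⦄, x ≤ y → y ∈ S → x ∈ S := fun x y hxy hy =>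
    le_trans ((cdf gm).mono hxy) hy
  have hrc : ∀ t : ℝ, (∀ s, t < s → s ∉ S) → a ≤ cdf gm t := by
    intro t h
    have hc : Tendsto (cdf gm) (nhdsWithin t (Ioi t)) (nhds (cdf gm t)) :=
      ((cdf gm).right_continuous t).mono_left (nhdsWithin_mono _ Ioi_subset_Ici_self)
    refine ge_of_tendsto hc ?_
    filter_upwards [self_mem_nhdsWithin] with s hs
    have := h s hs
    simp only [hS, mem_setOf_eq, not_le] at this
    exact this.le
  rcases lowerSet_cases hlow with h | h | ⟨t, h⟩ | ⟨t, h⟩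
  · -- S = ∅ : a = 0
    have ha : a ≤ 0 := by
      refine ge_of_tendsto (tendsto_cdf_atBot (μ := gm)) ?_
      filter_upwards with g
      have : g ∉ S := h ▸ (Set.notMem_empty g)
      simp only [hS, mem_setOf_eq, not_le] at this
      exact this.le
    have : a = 0 := le_antisymm ha h0
    simp [h, this]
  · -- S = univ : a = 1
    have ha : 1 ≤ a := by
      refine le_of_tendsto (tendsto_cdf_atTop (μ := gm)) ?_
      filter_upwards with g
      have : g ∈ S := h ▸ mem_univ g
      exact this
    have : a = 1 := le_antisymm h1 ha
    rw [h, this]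
    simp
  · -- S = Iic t
    have htS : t ∈ S := h ▸ mem_Iic.mpr le_rfl
    have hge : a ≤ cdf gm t := by
      refine hrc t fun s hs hsS => ?_
      have : s ≤ t := by rw [h] at hsS; exact hsS
      linarith
    have hle : cdf gm t ≤ a := htS
    rw [h, ← ofReal_cdf (μ := gm) t, le_antisymm hle hge]
  · -- S = Iio t
    have hge : a ≤ cdf gm t := by
      refine hrc t fun s hs hsS => ?_
      have : s < t := by rw [h] at hsS; exact hsS
      linarith
    have hup : gm (Iio t) ≤ ENNReal.ofReal a := by
      rw [Iio_eq_iUnion_Iic]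
      rw [Directed.measure_iUnion]
      · refine iSup_le fun n => ?_
        have hmem : t - (1 / (n + 1) : ℝ) ∈ S := by
          rw [h]
          simp only [mem_Iio]
          have : (0:ℝ) < 1 / ((n:ℝ) + 1) := by positivity
          push_cast
          linarith
        rw [← ofReal_cdf (μ := gm)]
        exact ENNReal.ofReal_le_ofReal hmem
      · refine Monotone.directed_le fun m n hmn => Iic_subset_Iic.mpr ?_
        have hc : ((m:ℝ)) ≤ (n:ℝ) := Nat.cast_le.mpr hmn
        have : (1 / ((n:ℝ) + 1)) ≤ 1 / ((m:ℝ) + 1) := by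
          apply one_div_le_one_div_of_le
          · positivity
          · linarith
        linarith
    have hdn : ENNReal.ofReal a ≤ gm (Iio t) := by
      have : gm (Iio t) = gm (Iic t) := measure_congr (Iio_ae_eq_Iic)
      rw [this, ← ofReal_cdf (μ := gm)]
      exact ENNReal.ofReal_le_ofReal hge
    rw [h]
    exact le_antisymm hup hdn


lemma np_aux {P Q : Measure ℝ} [IsProbabilityMeasure P] [IsProbabilityMeasure Q]
    {S : Set ℝ} (hSm : MeasurableSet S) {c : ℝ≥0∞}
    (h1 : c • P.restrict S ≤ Q.restrict S) (h2 : Q.restrict Sᶜ ≤ c • P.restrict Sᶜ)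
    {f : ℝ → ℝ≥0∞} (hf : Measurable f) (hf1 : ∀ x, f x ≤ 1)
    (hfP : ∫⁻ g, f g ∂P ≤ P S) : ∫⁻ g, f g ∂Q ≤ Q S := by
  have hone : ∀ (ν : Measure ℝ) (A : Set ℝ),
      ∫⁻ g in A, f g ∂ν + ∫⁻ g in A, (1 - f g) ∂ν = ν A := by
    intro ν A
    rw [← lintegral_add_left hf]
    have : ∀ g : ℝ, f g + (1 - f g) = 1 := fun g => add_tsub_cancel_of_le (hf1 g)
    simp_rw [this]
    exact setLIntegral_one A
  -- key : ∫⁻ Sᶜ f dP ≤ ∫⁻ S (1-f) dP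
  have key : ∫⁻ g in Sᶜ, f g ∂P ≤ ∫⁻ g in S, (1 - f g) ∂P := by
    have h3 : ∫⁻ g in S, f g ∂P + ∫⁻ g in Sᶜ, f g ∂P ≤
        ∫⁻ g in S, f g ∂P + ∫⁻ g in S, (1 - f g) ∂P := by
      rw [lintegral_add_compl f hSm, hone P S]
      exact hfP
    have hfin : ∫⁻ g in S, f g ∂P ≠ ⊤ := by
      refine ne_of_lt (lt_of_le_of_lt ?_ (measure_lt_top P S))
      rw [← hone P S]; exact le_self_add
    exact (ENNReal.add_le_add_iff_left hfin).mp h3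
  have hmid : ∫⁻ g in Sᶜ, f g ∂Q ≤ ∫⁻ g in S, (1 - f g) ∂Q := by
    calc ∫⁻ g in Sᶜ, f g ∂Q ≤ ∫⁻ g, f g ∂(c • P.restrict Sᶜ) := lintegral_mono' h2 le_rfl
      _ = c * ∫⁻ g in Sᶜ, f g ∂P := lintegral_smul_measure c f
      _ ≤ c * ∫⁻ g in S, (1 - f g) ∂P := mul_le_mul_right key c
      _ = ∫⁻ g, (1 - f g) ∂(c • P.restrict S) := (lintegral_smul_measure c _).symm
      _ ≤ ∫⁻ g in S, (1 - f g) ∂Q := lintegral_mono' h1 le_rfl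
  calc ∫⁻ g, f g ∂Q = ∫⁻ g in S, f g ∂Q + ∫⁻ g in Sᶜ, f g ∂Q :=
        (lintegral_add_compl f hSm).symm
    _ ≤ ∫⁻ g in S, f g ∂Q + ∫⁻ g in S, (1 - f g) ∂Q := add_le_add_right hmid _
    _ = Q S := hone Q S

lemma pdf_ratio (zt g : ℝ) :
    gaussianPDFReal 0 1 g = gaussianPDFReal zt 1 g * Real.exp (zt^2/2 - zt*g) := by
  simp only [gaussianPDFReal, NNReal.coe_one, mul_one, sub_zero]
  rw [mul_assoc, ← Real.exp_add]
  congr 1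
  ring

lemma np_main {zt a : ℝ} (hzt : 0 ≤ zt) {f : ℝ → ℝ≥0∞} (hf : Measurable f)
    (hf1 : ∀ x, f x ≤ 1) (ha : ∫⁻ g, f (g + zt) ∂gm = ENNReal.ofReal a)
    (ha0 : 0 ≤ a) (ha1 : a ≤ 1) :
    ∫⁻ g, f g ∂gm ≤ gm {g | cdf gm (g - zt) ≤ a} := by
  set S := {g | cdf gm (g - zt) ≤ a} with hSdef
  set P : Measure ℝ := gaussianReal zt 1 with hPdef
  have hmap : gm.map (· + zt) = P := by
    rw [gaussianReal_map_add_const zt, zero_add]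
  have hfP : ∫⁻ g, f g ∂P = ENNReal.ofReal a := by
    rw [← hmap, lintegral_map hf (measurable_add_const zt)]
    exact ha
  have hSm : MeasurableSet S :=
    measurableSet_le ((cdf gm).mono.measurable.comp (measurable_id.sub_const zt))
      measurable_const
  have hPS : P S = ENNReal.ofReal a := by
    rw [← hmap, Measure.map_apply (measurable_add_const zt) hSm]
    have hpre : (· + zt) ⁻¹' S = {g | cdf gm g ≤ a} := by
      ext g
      simp [hSdef, add_sub_cancel_right]
    rw [hpre, measure_cdf_le ha0 ha1]
  have hlow : ∀ ⦃x y : ℝ⦄, x ≤ y → y ∈ S → x ∈ S := fun x y hxy hy =>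
    le_trans ((cdf gm).mono (by linarith : x - zt ≤ y - zt)) hy
  have main : ∀ t : ℝ, (∀ g ∈ S, g ≤ t) → (∀ g ∉ S, t ≤ g) →
      ∫⁻ g, f g ∂gm ≤ gm S := by
    intro t hSle hScge
    set c : ℝ≥0∞ := ENNReal.ofReal (Real.exp (zt^2/2 - zt*t)) with hc
    have hQd : gm = volume.withDensity (gaussianPDF 0 1) :=
      gaussianReal_of_var_ne_zero 0 one_ne_zero
    have hPd : P = volume.withDensity (gaussianPDF zt 1) :=
      gaussianReal_of_var_ne_zero zt one_ne_zero
    have hkey : ∀ g : ℝ, g ≤ t → c * gaussianPDF zt 1 g ≤ gaussianPDF 0 1 g := by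
      intro g hg
      rw [gaussianPDF, gaussianPDF, hc, ← ENNReal.ofReal_mul (exp_nonneg _),
        pdf_ratio zt g]
      refine ENNReal.ofReal_le_ofReal ?_
      rw [mul_comm]
      refine mul_le_mul_of_nonneg_left ?_ (gaussianPDFReal_nonneg zt 1 g)
      exact Real.exp_le_exp.mpr (by nlinarith [mul_le_mul_of_nonneg_left hg hzt])
    have hkey' : ∀ g : ℝ, t ≤ g → gaussianPDF 0 1 g ≤ c * gaussianPDF zt 1 g := by
      intro g hg
      rw [gaussianPDF, gaussianPDF, hc, ← ENNReal.ofReal_mul (exp_nonneg _),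
        pdf_ratio zt g]
      refine ENNReal.ofReal_le_ofReal ?_
      rw [mul_comm (Real.exp _)]
      refine mul_le_mul_of_nonneg_left ?_ (gaussianPDFReal_nonneg zt 1 g)
      exact Real.exp_le_exp.mpr (by nlinarith [mul_le_mul_of_nonneg_left hg hzt])
    have h1 : c • P.restrict S ≤ gm.restrict S := by
      rw [hPd, hQd, restrict_withDensity hSm, restrict_withDensity hSm,
        ← withDensity_smul c (measurable_gaussianPDF zt 1)]
      refine withDensity_mono ?_
      filter_upwards [ae_restrict_mem hSm] with g hg
      exact hkey g (hSle g hg)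
    have h2 : gm.restrict Sᶜ ≤ c • P.restrict Sᶜ := by
      rw [hPd, hQd, restrict_withDensity hSm.compl, restrict_withDensity hSm.compl,
        ← withDensity_smul c (measurable_gaussianPDF zt 1)]
      refine withDensity_mono ?_
      filter_upwards [ae_restrict_mem hSm.compl] with g hg
      exact hkey' g (hScge g hg)
    exact np_aux hSm h1 h2 hf hf1 (by rw [hfP, hPS])
  rcases lowerSet_cases hlow with h | h | ⟨t, h⟩ | ⟨t, h⟩
  · -- S = ∅
    have h0 : ∫⁻ g, f g ∂P = 0 := by
      rw [hfP, ← hPS, h, measure_empty]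
    have hae : f =ᵐ[P] 0 := (lintegral_eq_zero_iff hf).mp h0
    have hgmP : gm ≪ P :=
      (gaussianReal_absolutelyContinuous 0 one_ne_zero).trans
        (gaussianReal_absolutelyContinuous' zt one_ne_zero)
    have hae' : f =ᵐ[gm] 0 := hae.filter_mono hgmP.ae_le
    rw [lintegral_congr_ae hae']; simp only [Pi.zero_apply, lintegral_zero]
    exact zero_le
  · rw [h, measure_univ]
    calc ∫⁻ g, f g ∂gm ≤ ∫⁻ _, 1 ∂gm := lintegral_mono hf1
      _ = 1 := by simp
  · refine main t ?_ ?_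
    · intro g hg; rw [h] at hg; exact hg
    · intro g hg; rw [h] at hg; exact le_of_not_gt fun hlt => hg hlt.le
  · refine main t ?_ ?_
    · intro g hg; rw [h] at hg; exact hg.le
    · intro g hg; rw [h] at hg; exact le_of_not_gt hg

/-- Gaussian coupling comparison: if `Z ≥ Z̃ ≥ 0` a.s. with `Z > 0` a.s. and
`G ~ N(0,1)` independent of `(Z, Z̃)`, then
`T(law(Z, Z+G) ‖ law(Z, G)) ⪯ T(law(Z̃, Z̃+G) ‖ law(Z̃, G))` on `[0,1]`. -/
theorem tradeoff_gaussian_coupling {Ω : Type*} [MeasurableSpace Ω]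
    (μ : Measure Ω) [IsProbabilityMeasure μ]
    (Z Zt G : Ω → ℝ) (hZ : Measurable Z) (hZt : Measurable Zt) (hG : Measurable G)
    (hord : ∀ᵐ ω ∂μ, 0 ≤ Zt ω ∧ Zt ω ≤ Z ω) (hZpos : ∀ᵐ ω ∂μ, 0 < Z ω)
    (hGlaw : μ.map G = gaussianReal 0 1)
    (hindep : IndepFun (fun ω => (Z ω, Zt ω)) G μ) :
    ∀ α ∈ Set.Icc (0 : ℝ) 1,
      tradeoff (μ.map fun ω => (Z ω, Z ω + G ω)) (μ.map fun ω => (Z ω, G ω)) α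
        ≤ tradeoff (μ.map fun ω => (Zt ω, Zt ω + G ω)) (μ.map fun ω => (Zt ω, G ω)) α := by
  intro α hα
  have hZZt : Measurable fun ω => (Z ω, Zt ω) := hZ.prodMk hZt
  set γm : Measure ℝ := gaussianReal 0 1 with hγm
  set ρ : Measure (ℝ × ℝ) := μ.map (fun ω => (Z ω, Zt ω)) with hρ
  haveI : IsProbabilityMeasure ρ := Measure.isProbabilityMeasure_map hZZt.aemeasurable
  set κ : Kernel ℝ ℝ := ρ.condKernel with hκ
  set Pm : Measure ((ℝ × ℝ) × ℝ) := ρ.prod γm with hPmdef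
  have htriple : Measurable fun ω => ((Z ω, Zt ω), G ω) := hZZt.prodMk hG
  have hPm : μ.map (fun ω => ((Z ω, Zt ω), G ω)) = Pm := by
    rw [hPmdef, hρ, ← hGlaw]
    exact (indepFun_iff_map_prod_eq_prod_map_map hZZt.aemeasurable hG.aemeasurable).mp hindep
  set e₁ : (ℝ × ℝ) × ℝ → ℝ × ℝ := fun p => (p.1.1, p.1.1 + p.2) with he₁
  set e₂ : (ℝ × ℝ) × ℝ → ℝ × ℝ := fun p => (p.1.1, p.2) with he₂
  set e₃ : (ℝ × ℝ) × ℝ → ℝ × ℝ := fun p => (p.1.2, p.1.2 + p.2) with he₃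
  set e₄ : (ℝ × ℝ) × ℝ → ℝ × ℝ := fun p => (p.1.2, p.2) with he₄
  have hff : Measurable fun p : (ℝ × ℝ) × ℝ => p.1.1 := measurable_fst.comp measurable_fst
  have hfs : Measurable fun p : (ℝ × ℝ) × ℝ => p.1.2 := measurable_snd.comp measurable_fst
  have he₁m : Measurable e₁ := hff.prodMk (hff.add measurable_snd)
  have he₂m : Measurable e₂ := hff.prodMk measurable_snd
  have he₃m : Measurable e₃ := hfs.prodMk (hfs.add measurable_snd)
  have he₄m : Measurable e₄ := hfs.prodMk measurable_snd
  have hm1 : μ.map (fun ω => (Z ω, Z ω + G ω)) = Pm.map e₁ := by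
    rw [← hPm, Measure.map_map he₁m htriple]; rfl
  have hm2 : μ.map (fun ω => (Z ω, G ω)) = Pm.map e₂ := by
    rw [← hPm, Measure.map_map he₂m htriple]; rfl
  have hm3 : μ.map (fun ω => (Zt ω, Zt ω + G ω)) = Pm.map e₃ := by
    rw [← hPm, Measure.map_map he₃m htriple]; rfl
  have hm4 : μ.map (fun ω => (Zt ω, G ω)) = Pm.map e₄ := by
    rw [← hPm, Measure.map_map he₄m htriple]; rfl
  rw [hm1, hm2, hm3, hm4]
  haveI : IsProbabilityMeasure (Pm.map e₂) := Measure.isProbabilityMeasure_map he₂m.aemeasurable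
  haveI : IsProbabilityMeasure (Pm.map e₄) := Measure.isProbabilityMeasure_map he₄m.aemeasurable
  -- conversion of integrals
  have conv : ∀ (e : (ℝ × ℝ) × ℝ → ℝ × ℝ), Measurable e → ∀ (ξ : ℝ × ℝ → ℝ), Measurable ξ →
      (∀ x, ξ x ∈ Set.Icc (0:ℝ) 1) →
      ∫ x, ξ x ∂(Pm.map e) = (∫⁻ p, ENNReal.ofReal (ξ (e p)) ∂Pm).toReal := by
    intro e hem ξ hξm hξ01
    rw [integral_map hem.aemeasurable hξm.aestronglyMeasurable,
      integral_eq_lintegral_of_nonneg_ae (ae_of_all _ fun p => (hξ01 (e p)).1)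
        ((hξm.comp hem).aestronglyMeasurable)]
  have hle1 : ∀ f : (ℝ × ℝ) × ℝ → ℝ, (∀ x, f x ∈ Set.Icc (0:ℝ) 1) →
      ∫⁻ p, ENNReal.ofReal (f p) ∂Pm ≤ 1 := by
    intro f hf
    calc ∫⁻ p, ENNReal.ofReal (f p) ∂Pm ≤ ∫⁻ _, 1 ∂Pm :=
          lintegral_mono fun p => ENNReal.ofReal_le_one.mpr (hf p).2
      _ = 1 := by simp
  -- disintegration identity
  have LF : ∀ w : ℝ × ℝ → ℝ≥0∞, Measurable w →
      ∫⁻ p, (∫⁻ z', w (p.1, z') ∂(κ p.1)) ∂ρ = ∫⁻ p, w p ∂ρ := by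
    intro w hw
    have hH : Measurable fun z => ∫⁻ z', w (z, z') ∂(κ z) :=
      Measurable.lintegral_kernel_prod_right (f := fun a b => w (a, b)) hw
    calc ∫⁻ p, (∫⁻ z', w (p.1, z') ∂(κ p.1)) ∂ρ
        = ∫⁻ z, (∫⁻ z', w (z, z') ∂(κ z)) ∂(ρ.map Prod.fst) :=
          (lintegral_map hH measurable_fst).symm
      _ = ∫⁻ p, w p ∂(ρ.fst ⊗ₘ κ) := (Measure.lintegral_compProd hw).symm
      _ = ∫⁻ p, w p ∂ρ := by rw [hκ, Measure.disintegrate]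
  -- swap identity
  have SWAP : ∀ V : Set (ℝ × ℝ), MeasurableSet V → ∀ z : ℝ,
      ∫⁻ g, κ z {z' | (g, z') ∈ V} ∂γm = ∫⁻ z', γm {g | (g, z') ∈ V} ∂(κ z) := by
    intro V hV z
    have h1 : ∫⁻ g, κ z {z' | (g, z') ∈ V} ∂γm = (γm.prod (κ z)) V :=
      (Measure.prod_apply hV).symm
    have h2 : (γm.prod (κ z)) V = ∫⁻ z', γm {g | (g, z') ∈ V} ∂(κ z) :=
      Measure.prod_apply_symm hV
    rw [h1, h2]
  -- ρ-a.e. ordering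
  have hordρ : ∀ᵐ p ∂ρ, 0 ≤ p.2 ∧ p.2 ≤ p.1 := by
    rw [hρ]
    refine (ae_map_iff hZZt.aemeasurable ?_).mpr hord
    exact (measurableSet_le measurable_const measurable_snd).inter
      (measurableSet_le measurable_snd measurable_fst)
  have hcdfm : Measurable (cdf γm : ℝ → ℝ) := (cdf γm).mono.measurable
  -- main argument
  simp only [tradeoff]
  refine le_csInf ⟨1, fun _ => (0:ℝ), measurable_const,
      fun x => ⟨le_refl 0, zero_le_one⟩, by simpa using hα.1, by simp⟩ ?_
  rintro b ⟨φ, hφm, hφ01, hφα, rfl⟩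
  -- the size function A
  set A : ℝ → ℝ := fun z' => ∫ g, φ (z', z' + g) ∂γm with hA
  have hφpair : Measurable fun p : ℝ × ℝ => φ (p.1, p.1 + p.2) :=
    hφm.comp (measurable_fst.prodMk (measurable_fst.add measurable_snd))
  have hAm : Measurable A :=
    (StronglyMeasurable.integral_prod_right' (ν := γm) hφpair.stronglyMeasurable).measurable
  have hA01 : ∀ z', A z' ∈ Set.Icc (0:ℝ) 1 := by
    intro z'
    constructor
    · exact integral_nonneg fun g => (hφ01 _).1
    · calc A z' ≤ ∫ _, (1:ℝ) ∂γm :=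
            integral_mono_of_nonneg (ae_of_all _ fun g => (hφ01 _).1) (integrable_const 1)
              (ae_of_all _ fun g => (hφ01 _).2)
        _ = 1 := by simp
  have hofA : ∀ z', ENNReal.ofReal (A z') = ∫⁻ g, ENNReal.ofReal (φ (z', z' + g)) ∂γm := by
    intro z'
    have hint : ∫ g, φ (z', z' + g) ∂γm = (∫⁻ g, ENNReal.ofReal (φ (z', z' + g)) ∂γm).toReal :=
      integral_eq_lintegral_of_nonneg_ae (ae_of_all _ fun g => (hφ01 _).1)
        ((hφm.comp (measurable_const.prodMk (measurable_const.add measurable_id))).aestronglyMeasurable)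
    rw [hA]
    simp only
    rw [hint, ENNReal.ofReal_toReal]
    refine ne_of_lt (lt_of_le_of_lt (lintegral_mono fun g => ENNReal.ofReal_le_one.mpr (hφ01 _).2) ?_)
    simp [ENNReal.one_lt_top]
  -- the test ψ
  set W : Set ((ℝ × ℝ) × ℝ) := {r | cdf γm (r.1.2 - r.2) ≤ A r.2} with hW
  have hWm : MeasurableSet W :=
    measurableSet_le (hcdfm.comp ((measurable_snd.comp measurable_fst).sub measurable_snd))
      (hAm.comp measurable_snd)
  set ψ : ℝ × ℝ → ℝ := fun q => (κ q.1 {z' | (q, z') ∈ W}).toReal with hψ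
  have hψm : Measurable ψ := by
    have h0 : Measurable fun q : ℝ × ℝ => (κ.comap Prod.fst measurable_fst) q {z' | (q, z') ∈ W} :=
      Kernel.measurable_kernel_prodMk_left hWm
    simp only [Kernel.comap_apply] at h0
    exact h0.ennreal_toReal
  have hψ01 : ∀ q, ψ q ∈ Set.Icc (0:ℝ) 1 := by
    intro q
    refine ⟨ENNReal.toReal_nonneg, ?_⟩
    have h1 : κ q.1 {z' | (q, z') ∈ W} ≤ 1 := prob_le_one
    simpa using ENNReal.toReal_mono ENNReal.one_ne_top h1
  have hofψ : ∀ q : ℝ × ℝ, ENNReal.ofReal (ψ q) = κ q.1 {z' | (q, z') ∈ W} :=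
    fun q => ENNReal.ofReal_toReal (measure_ne_top _ _)
  -- EST1
  set w₁ : ℝ × ℝ → ℝ≥0∞ := fun p => γm {g | cdf γm (p.1 + g - p.2) ≤ A p.2} with hw₁
  have hw₁m : Measurable w₁ := by
    have hVm : MeasurableSet {r : (ℝ × ℝ) × ℝ | cdf γm (r.1.1 + r.2 - r.1.2) ≤ A r.1.2} :=
      measurableSet_le (hcdfm.comp ((hff.add measurable_snd).sub hfs)) (hAm.comp hfs)
    exact measurable_measure_prodMk_left hVm
  have E1 : ∫⁻ p, ENNReal.ofReal (ψ (e₁ p)) ∂Pm = ∫⁻ p, w₁ p ∂ρ := by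
    have hfm : Measurable fun p : (ℝ × ℝ) × ℝ => ENNReal.ofReal (ψ (e₁ p)) :=
      (hψm.comp he₁m).ennreal_ofReal
    rw [hPmdef, lintegral_prod _ hfm.aemeasurable]
    rw [← LF w₁ hw₁m]
    refine lintegral_congr fun x => ?_
    have hVxm : MeasurableSet {p : ℝ × ℝ | cdf γm (x.1 + p.1 - p.2) ≤ A p.2} :=
      measurableSet_le (hcdfm.comp ((measurable_const.add measurable_fst).sub measurable_snd))
        (hAm.comp measurable_snd)
    calc ∫⁻ g, ENNReal.ofReal (ψ (e₁ (x, g))) ∂γm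
        = ∫⁻ g, κ x.1 {z' | (g, z') ∈ {p : ℝ × ℝ | cdf γm (x.1 + p.1 - p.2) ≤ A p.2}} ∂γm := by
          refine lintegral_congr fun g => ?_
          exact hofψ (e₁ (x, g))
      _ = ∫⁻ z', γm {g | (g, z') ∈ {p : ℝ × ℝ | cdf γm (x.1 + p.1 - p.2) ≤ A p.2}} ∂(κ x.1) :=
          SWAP _ hVxm x.1
      _ = ∫⁻ z', w₁ (x.1, z') ∂(κ x.1) := rfl
  have E3 : ∫⁻ p, ENNReal.ofReal (φ (e₃ p)) ∂Pm = ∫⁻ p, ENNReal.ofReal (A p.2) ∂ρ := by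
    have hfm : Measurable fun p : (ℝ × ℝ) × ℝ => ENNReal.ofReal (φ (e₃ p)) :=
      (hφm.comp he₃m).ennreal_ofReal
    rw [hPmdef, lintegral_prod _ hfm.aemeasurable]
    exact lintegral_congr fun x => (hofA x.2).symm
  have EST1 : ∫⁻ p, ENNReal.ofReal (ψ (e₁ p)) ∂Pm ≤ ∫⁻ p, ENNReal.ofReal (φ (e₃ p)) ∂Pm := by
    rw [E1, E3]
    refine lintegral_mono_ae ?_
    filter_upwards [hordρ] with p hp
    have hsub : {g | cdf γm (p.1 + g - p.2) ≤ A p.2} ⊆ {g | cdf γm g ≤ A p.2} := by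
      intro g hg
      exact le_trans ((cdf γm).mono (by linarith [hp.2] : g ≤ p.1 + g - p.2)) hg
    calc w₁ p ≤ γm {g | cdf γm g ≤ A p.2} := measure_mono hsub
      _ = ENNReal.ofReal (A p.2) := measure_cdf_le (hA01 p.2).1 (hA01 p.2).2
  -- EST2
  set w₂ : ℝ × ℝ → ℝ≥0∞ := fun p => γm {g | cdf γm (g - p.2) ≤ A p.2} with hw₂
  have hw₂m : Measurable w₂ := by
    have hVm : MeasurableSet {r : (ℝ × ℝ) × ℝ | cdf γm (r.2 - r.1.2) ≤ A r.1.2} :=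
      measurableSet_le (hcdfm.comp (measurable_snd.sub hfs)) (hAm.comp hfs)
    exact measurable_measure_prodMk_left hVm
  have E2 : ∫⁻ p, ENNReal.ofReal (ψ (e₂ p)) ∂Pm = ∫⁻ p, w₂ p ∂ρ := by
    have hfm : Measurable fun p : (ℝ × ℝ) × ℝ => ENNReal.ofReal (ψ (e₂ p)) :=
      (hψm.comp he₂m).ennreal_ofReal
    rw [hPmdef, lintegral_prod _ hfm.aemeasurable]
    rw [← LF w₂ hw₂m]
    refine lintegral_congr fun x => ?_
    have hVxm : MeasurableSet {p : ℝ × ℝ | cdf γm (p.1 - p.2) ≤ A p.2} :=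
      measurableSet_le (hcdfm.comp (measurable_fst.sub measurable_snd)) (hAm.comp measurable_snd)
    calc ∫⁻ g, ENNReal.ofReal (ψ (e₂ (x, g))) ∂γm
        = ∫⁻ g, κ x.1 {z' | (g, z') ∈ {p : ℝ × ℝ | cdf γm (p.1 - p.2) ≤ A p.2}} ∂γm := by
          refine lintegral_congr fun g => ?_
          exact hofψ (e₂ (x, g))
      _ = ∫⁻ z', γm {g | (g, z') ∈ {p : ℝ × ℝ | cdf γm (p.1 - p.2) ≤ A p.2}} ∂(κ x.1) :=
          SWAP _ hVxm x.1
      _ = ∫⁻ z', w₂ (x.1, z') ∂(κ x.1) := rfl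
  have E4 : ∫⁻ p, ENNReal.ofReal (φ (e₄ p)) ∂Pm
      = ∫⁻ p, (∫⁻ g, ENNReal.ofReal (φ (p.2, g)) ∂γm) ∂ρ := by
    rw [hPmdef]
    exact lintegral_prod _ ((hφm.comp he₄m).ennreal_ofReal).aemeasurable
  have EST2 : ∫⁻ p, ENNReal.ofReal (φ (e₄ p)) ∂Pm ≤ ∫⁻ p, ENNReal.ofReal (ψ (e₂ p)) ∂Pm := by
    rw [E2, E4]
    refine lintegral_mono_ae ?_
    filter_upwards [hordρ] with p hp
    refine np_main hp.1 (f := fun g => ENNReal.ofReal (φ (p.2, g)))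
      ((hφm.comp (measurable_const.prodMk measurable_id)).ennreal_ofReal)
      (fun g => ENNReal.ofReal_le_one.mpr (hφ01 _).2) ?_ (hA01 p.2).1 (hA01 p.2).2
    refine Eq.trans ?_ (hofA p.2).symm
    refine lintegral_congr fun g => ?_
    rw [add_comm]
  -- final assembly
  have hne3 : ∫⁻ p, ENNReal.ofReal (φ (e₃ p)) ∂Pm ≠ ⊤ :=
    (lt_of_le_of_lt (hle1 _ fun p => hφ01 (e₃ p)) ENNReal.one_lt_top).ne
  have hne2 : ∫⁻ p, ENNReal.ofReal (ψ (e₂ p)) ∂Pm ≠ ⊤ :=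
    (lt_of_le_of_lt (hle1 _ fun p => hψ01 (e₂ p)) ENNReal.one_lt_top).ne
  have hψα : ∫ x, ψ x ∂(Pm.map e₁) ≤ α := by
    rw [conv e₁ he₁m ψ hψm hψ01]
    calc (∫⁻ p, ENNReal.ofReal (ψ (e₁ p)) ∂Pm).toReal
        ≤ (∫⁻ p, ENNReal.ofReal (φ (e₃ p)) ∂Pm).toReal := ENNReal.toReal_mono hne3 EST1
      _ = ∫ x, φ x ∂(Pm.map e₃) := (conv e₃ he₃m φ hφm hφ01).symm
      _ ≤ α := hφα
  have hint24 : ∫ x, φ x ∂(Pm.map e₄) ≤ ∫ x, ψ x ∂(Pm.map e₂) := by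
    rw [conv e₂ he₂m ψ hψm hψ01, conv e₄ he₄m φ hφm hφ01]
    exact ENNReal.toReal_mono hne2 EST2
  have hbdd : BddBelow { b : ℝ | ∃ ξ : ℝ × ℝ → ℝ, Measurable ξ ∧ (∀ x, ξ x ∈ Set.Icc (0 : ℝ) 1) ∧
      (∫ x, ξ x ∂(Pm.map e₁)) ≤ α ∧ b = 1 - ∫ x, ξ x ∂(Pm.map e₂) } := by
    refine ⟨0, ?_⟩
    rintro b ⟨ξ, hξm, hξ01, -, rfl⟩
    have : ∫ x, ξ x ∂(Pm.map e₂) ≤ 1 := by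
      calc ∫ x, ξ x ∂(Pm.map e₂) ≤ ∫ _, (1:ℝ) ∂(Pm.map e₂) :=
            integral_mono_of_nonneg (ae_of_all _ fun x => (hξ01 x).1) (integrable_const 1)
              (ae_of_all _ fun x => (hξ01 x).2)
        _ = 1 := by simp
    linarith
  have hmem : (1 - ∫ x, ψ x ∂(Pm.map e₂)) ∈ { b : ℝ | ∃ ξ : ℝ × ℝ → ℝ, Measurable ξ ∧
      (∀ x, ξ x ∈ Set.Icc (0 : ℝ) 1) ∧
      (∫ x, ξ x ∂(Pm.map e₁)) ≤ α ∧ b = 1 - ∫ x, ξ x ∂(Pm.map e₂) } :=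
    ⟨ψ, hψm, hψ01, hψα, rfl⟩
  calc sInf { b : ℝ | ∃ ξ : ℝ × ℝ → ℝ, Measurable ξ ∧ (∀ x, ξ x ∈ Set.Icc (0 : ℝ) 1) ∧
        (∫ x, ξ x ∂(Pm.map e₁)) ≤ α ∧ b = 1 - ∫ x, ξ x ∂(Pm.map e₂) }
      ≤ 1 - ∫ x, ψ x ∂(Pm.map e₂) := csInf_le hbdd hmem
    _ ≤ 1 - ∫ x, φ x ∂(Pm.map e₄) := by linarith
end

section
/- (Mapping lemma underlying the Gaussian coupling comparison) Let (Z, Z̃) be a pair of real random variables on a common probability space with Z ≥ Z̃ ≥ 0 and Z > 0 almost surely, and let G and G' be standard normal random variables, with G independent of (Z, Z̃) and G' independent of everything else. Define the randomized map M(z, a) = (z̃, (z̃/z)·a + √(1 − (z̃/z)²)·G'), where z̃ is sampled from the conditional distribution of Z̃ given Z = z. Then M applied to (Z, Z + G) has the same law as (Z̃, Z̃ + H) and M applied to (Z, G) has the same law as (Z̃, H), where H is a standard normal random variable independent of Z̃. -/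
open MeasureTheory ProbabilityTheory Real
open scoped ENNReal

section Rot
open scoped ENNReal

noncomputable def rotLin (c s : ℝ) : (ℝ × ℝ) →ₗ[ℝ] (ℝ × ℝ) :=
  Matrix.toLin (Module.Basis.finTwoProd ℝ) (Module.Basis.finTwoProd ℝ) !![c, s; -s, c]

lemma rotLin_apply (c s : ℝ) (p : ℝ × ℝ) :
    rotLin c s p = (c * p.1 + s * p.2, -s * p.1 + c * p.2) := by
  rw [rotLin]
  rw [Matrix.toLin_finTwoProd_apply]

lemma rotLin_measurable (c s : ℝ) : Measurable (rotLin c s) :=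
  (LinearMap.continuous_of_finiteDimensional (rotLin c s)).measurable

lemma rotLin_measurePreserving {c s : ℝ} (h : c ^ 2 + s ^ 2 = 1) :
    MeasurePreserving (rotLin c s) (volume : Measure (ℝ × ℝ)) volume := by
  refine ⟨rotLin_measurable c s, ?_⟩
  have hdet : LinearMap.det (rotLin c s) = 1 := by
    rw [rotLin, LinearMap.det_toLin, Matrix.det_fin_two_of]
    nlinarith
  rw [Measure.map_linearMap_addHaar_eq_smul_addHaar _ (by rw [hdet]; norm_num), hdet]
  norm_num

lemma gaussian_prod_withDensity :
    (gaussianReal 0 1).prod (gaussianReal 0 1)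
      = (volume : Measure (ℝ × ℝ)).withDensity
          (fun p => gaussianPDF 0 1 p.1 * gaussianPDF 0 1 p.2) := by
  refine Measure.prod_eq fun s t hs ht => ?_
  rw [withDensity_apply _ (hs.prod ht), Measure.volume_eq_prod ℝ ℝ, ← Measure.prod_restrict,
    lintegral_prod_mul (measurable_gaussianPDF 0 1).aemeasurable
      (measurable_gaussianPDF 0 1).aemeasurable,
    gaussianReal_apply 0 one_ne_zero s, gaussianReal_apply 0 one_ne_zero t]

lemma gaussianPDF_prod_eq (x y : ℝ) :
    gaussianPDF 0 1 x * gaussianPDF 0 1 y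
      = ENNReal.ofReal ((Real.sqrt (2 * π))⁻¹ ^ 2 * Real.exp (-(x ^ 2 + y ^ 2) / 2)) := by
  rw [gaussianPDF, gaussianPDF, ← ENNReal.ofReal_mul (gaussianPDFReal_nonneg _ _ _)]
  congr 1
  simp only [gaussianPDFReal, NNReal.coe_one, mul_one, sub_zero]
  rw [show (√(2 * π))⁻¹ * rexp (-x ^ 2 / 2) * ((√(2 * π))⁻¹ * rexp (-y ^ 2 / 2))
      = (√(2 * π))⁻¹ ^ 2 * (rexp (-x ^ 2 / 2) * rexp (-y ^ 2 / 2)) by ring, ← Real.exp_add]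
  congr 1
  ring

lemma gaussian_prod_rot_invariant {c s : ℝ} (h : c ^ 2 + s ^ 2 = 1) :
    ((gaussianReal 0 1).prod (gaussianReal 0 1)).map (rotLin c s)
      = (gaussianReal 0 1).prod (gaussianReal 0 1) := by
  set f : ℝ × ℝ → ℝ≥0∞ := fun p : ℝ × ℝ => gaussianPDF 0 1 p.1 * gaussianPDF 0 1 p.2 with hf
  have hfm : Measurable f :=
    ((measurable_gaussianPDF 0 1).comp measurable_fst).mul
      ((measurable_gaussianPDF 0 1).comp measurable_snd)
  have hinv : ∀ p : ℝ × ℝ, f (rotLin c s p) = f p := by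
    intro p
    rw [hf]
    simp only [rotLin_apply]
    rw [gaussianPDF_prod_eq, gaussianPDF_prod_eq]
    congr 3
    nlinarith
  ext u hu
  rw [Measure.map_apply (rotLin_measurable c s) hu, gaussian_prod_withDensity,
    withDensity_apply _ ((rotLin_measurable c s) hu), withDensity_apply _ hu]
  calc ∫⁻ p in rotLin c s ⁻¹' u, f p ∂volume
      = ∫⁻ p in rotLin c s ⁻¹' u, f (rotLin c s p) ∂volume := by
        refine setLIntegral_congr_fun ((rotLin_measurable c s) hu) (fun p _ => ?_)
        rw [hinv]
    _ = ∫⁻ p in u, f p ∂volume :=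
        (rotLin_measurePreserving h).setLIntegral_comp_preimage hu hfm

lemma gaussian_rot {c : ℝ} (h : c ^ 2 ≤ 1) :
    ((gaussianReal 0 1).prod (gaussianReal 0 1)).map
        (fun q : ℝ × ℝ => c * q.1 + Real.sqrt (1 - c ^ 2) * q.2)
      = gaussianReal 0 1 := by
  set s := Real.sqrt (1 - c ^ 2) with hs
  have hcs : c ^ 2 + s ^ 2 = 1 := by
    rw [hs, Real.sq_sqrt (by linarith)]; ring
  have hcomp : (fun q : ℝ × ℝ => c * q.1 + s * q.2) = Prod.fst ∘ (rotLin c s) := by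
    funext q
    simp [rotLin_apply]
  rw [hcomp, ← Measure.map_map measurable_fst (rotLin_measurable c s),
    gaussian_prod_rot_invariant hcs, Measure.map_fst_prod, measure_univ, one_smul]

end Rot

lemma measurable_measure_apply_comp {A : Type*} [MeasurableSpace A] (m : Measure ℝ) [SFinite m]
    {φ : A × ℝ → ℝ} (hφ : Measurable φ) {t : Set ℝ} (ht : MeasurableSet t) :
    Measurable (fun a => m ((fun y => φ (a, y)) ⁻¹' t)) := by
  have heq : ∀ a, m ((fun y => φ (a, y)) ⁻¹' t)
      = ∫⁻ y, (φ ⁻¹' t).indicator (fun _ => 1) (a, y) ∂m := by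
    intro a
    have hset : (fun y => φ (a, y)) ⁻¹' t = Prod.mk a ⁻¹' (φ ⁻¹' t) := rfl
    rw [hset, ← lintegral_indicator_one (measurable_prodMk_left (hφ ht))]
    refine lintegral_congr fun y => ?_
    by_cases hy : φ (a, y) ∈ t
    · simp [hy]
    · simp [hy]
  simp_rw [heq]
  exact Measurable.lintegral_prod_right
    (f := fun a y => (φ ⁻¹' t).indicator (fun _ => 1) (a, y))
    (measurable_one.indicator (hφ ht))

/-- Mapping lemma underlying the Gaussian coupling comparison:
with `ν` the conditional distribution of `Z̃` given `Z` (i.e. `law(Z, Z̃) = law(Z) ⊗ₘ ν`),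
the randomized map `M(z, a) = (z̃, (z̃/z)·a + √(1 − (z̃/z)²)·G')`, `z̃ ~ ν(z)`, `G' ~ N(0,1)`,
sends `law(Z, Z+G)` to `law(Z̃, Z̃+H)` and `law(Z, G)` to `law(Z̃, H)`,
where `H ~ N(0,1)` is independent of `Z̃`. -/
theorem gaussian_coupling_map {Ω : Type*} [MeasurableSpace Ω]
    (μ : Measure Ω) [IsProbabilityMeasure μ]
    (Z Zt G : Ω → ℝ) (hZ : Measurable Z) (hZt : Measurable Zt) (hG : Measurable G)
    (hord : ∀ᵐ ω ∂μ, 0 ≤ Zt ω ∧ Zt ω ≤ Z ω) (hZpos : ∀ᵐ ω ∂μ, 0 < Z ω)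
    (hGlaw : μ.map G = gaussianReal 0 1)
    (hindep : IndepFun (fun ω => (Z ω, Zt ω)) G μ)
    (ν : Kernel ℝ ℝ) [IsMarkovKernel ν]
    (hcond : μ.map (fun ω => (Z ω, Zt ω)) = (μ.map Z) ⊗ₘ ν)
    (M : ℝ × ℝ → Measure (ℝ × ℝ))
    (hM : M = fun p => ((ν p.1).prod (gaussianReal 0 1)).map
        (fun q => (q.1, q.1 / p.1 * p.2 + Real.sqrt (1 - (q.1 / p.1) ^ 2) * q.2))) :
    (μ.map fun ω => (Z ω, Z ω + G ω)).bind M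
        = ((μ.map Zt).prod (gaussianReal 0 1)).map (fun p => (p.1, p.1 + p.2)) ∧
      (μ.map fun ω => (Z ω, G ω)).bind M = (μ.map Zt).prod (gaussianReal 0 1) := by
  set γ : Measure ℝ := gaussianReal 0 1 with hγ
  set α : Measure ℝ := μ.map Z with hα
  set β : Measure ℝ := μ.map Zt with hβ
  haveI : IsProbabilityMeasure α := Measure.isProbabilityMeasure_map hZ.aemeasurable
  haveI : IsProbabilityMeasure β := Measure.isProbabilityMeasure_map hZt.aemeasurable
  -- measurability of the inner maps
  have hfmeas : ∀ p : ℝ × ℝ, Measurable (fun q : ℝ × ℝ =>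
      (q.1, q.1 / p.1 * p.2 + Real.sqrt (1 - (q.1 / p.1) ^ 2) * q.2)) := by
    intro p
    exact measurable_fst.prodMk
      (((measurable_fst.div_const _).mul_const _).add
        ((Real.continuous_sqrt.measurable.comp
          ((measurable_const.sub (((measurable_fst.div_const _)).pow_const 2)))).mul
          measurable_snd))
  have hF : Measurable (fun r : (ℝ × ℝ) × (ℝ × ℝ) =>
      (r.2.1, r.2.1 / r.1.1 * r.1.2 + Real.sqrt (1 - (r.2.1 / r.1.1) ^ 2) * r.2.2)) := by
    refine (measurable_fst.comp measurable_snd).prodMk ?_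
    refine Measurable.add ?_ ?_
    · exact ((measurable_fst.comp measurable_snd).div
        (measurable_fst.comp measurable_fst)).mul (measurable_snd.comp measurable_fst)
    · exact (Real.continuous_sqrt.measurable.comp
        (measurable_const.sub (((measurable_fst.comp measurable_snd).div
          (measurable_fst.comp measurable_fst)).pow_const 2))).mul
        (measurable_snd.comp measurable_snd)
  -- M as a kernel, for measurability
  set κ : Kernel (ℝ × ℝ) (ℝ × ℝ) :=
    Kernel.map (Kernel.id ×ₖ ((ν.comap Prod.fst measurable_fst) ×ₖ Kernel.const (ℝ × ℝ) γ))
      (fun r : (ℝ × ℝ) × (ℝ × ℝ) =>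
        (r.2.1, r.2.1 / r.1.1 * r.1.2 + Real.sqrt (1 - (r.2.1 / r.1.1) ^ 2) * r.2.2)) with hκ
  have hMeqκ : M = ⇑κ := by
    funext p
    rw [hM, hκ, Kernel.map_apply _ hF, Kernel.prod_apply, Kernel.id_apply, Kernel.prod_apply,
      Kernel.comap_apply, Kernel.const_apply, Measure.dirac_prod,
      Measure.map_map hF measurable_prodMk_left]
    rfl
  have hMmeas : Measurable M := by rw [hMeqκ]; exact κ.measurable
  -- law of (Z, G)
  have hZG : (μ.map fun ω => (Z ω, G ω)) = α.prod γ := by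
    have hZind : IndepFun Z G μ := hindep.comp measurable_fst measurable_id
    rw [(indepFun_iff_map_prod_eq_prod_map_map hZ.aemeasurable hG.aemeasurable).mp hZind,
      hGlaw]
  -- β via the kernel
  have hβs : ∀ s : Set ℝ, MeasurableSet s → β s = ∫⁻ z, ν z s ∂α := by
    intro s hs
    rw [hβ, Measure.map_apply hZt hs]
    have : Zt ⁻¹' s = (fun ω => (Z ω, Zt ω)) ⁻¹' (Set.univ ×ˢ s) := by
      ext ω; simp
    rw [this, ← Measure.map_apply (hZ.prodMk hZt) (MeasurableSet.univ.prod hs), hcond,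
      Measure.compProd_apply_prod MeasurableSet.univ hs, setLIntegral_univ]
  -- good points
  have hgood : ∀ᵐ z ∂α, 0 < z ∧ ∀ᵐ x ∂(ν z), 0 ≤ x ∧ x ≤ z := by
    have h1 : ∀ᵐ z ∂α, 0 < z := by
      rw [hα]
      exact (ae_map_iff hZ.aemeasurable measurableSet_Ioi).mpr hZpos
    have h2 : ∀ᵐ p ∂(α ⊗ₘ ν), 0 ≤ p.2 ∧ p.2 ≤ p.1 := by
      rw [← hcond]
      refine (ae_map_iff (hZ.prodMk hZt).aemeasurable ?_).mpr hord
      exact (measurableSet_le measurable_const measurable_snd).inter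
        (measurableSet_le measurable_snd measurable_fst)
    have h3 := Measure.ae_ae_of_ae_compProd h2
    filter_upwards [h1, h3] with z hz1 hz2 using ⟨hz1, hz2⟩
  -- the key computation
  have key2 : (α.prod γ).bind M = β.prod γ := by
    refine (Measure.prod_eq fun s t hs ht => ?_).symm
    rw [Measure.bind_apply (hs.prod ht) hMmeas.aemeasurable,
      MeasureTheory.lintegral_prod (fun p => M p (s ×ˢ t))
        (((Measure.measurable_coe (hs.prod ht)).comp hMmeas).aemeasurable)]
    have step : ∀ᵐ z ∂α, ∫⁻ g, M (z, g) (s ×ˢ t) ∂γ = γ t * ν z s := by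
      filter_upwards [hgood] with z hz
      obtain ⟨hz0, hzae⟩ := hz
      have hMval : ∀ g : ℝ, M (z, g) (s ×ˢ t)
          = ∫⁻ x, s.indicator
              (fun x => γ ((fun g' => x / z * g + Real.sqrt (1 - (x / z) ^ 2) * g') ⁻¹' t)) x
            ∂(ν z) := by
        intro g
        rw [hM]
        simp only
        rw [Measure.map_apply (hfmeas (z, g)) (hs.prod ht),
          Measure.prod_apply ((hfmeas (z, g)) (hs.prod ht))]
        refine lintegral_congr fun x => ?_
        by_cases hx : x ∈ s
        · rw [Set.indicator_of_mem hx]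
          congr 1
          ext g'
          simp [hx]
        · rw [Set.indicator_of_notMem hx]
          have hempty : Prod.mk x ⁻¹' ((fun q : ℝ × ℝ =>
              (q.1, q.1 / z * g + Real.sqrt (1 - (q.1 / z) ^ 2) * q.2)) ⁻¹' s ×ˢ t)
              = (∅ : Set ℝ) := by
            ext g'
            simp [hx]
          rw [hempty]
          exact measure_empty
      simp_rw [hMval]
      have hsec : Measurable (fun r : (ℝ × ℝ) × ℝ =>
          r.1.2 / z * r.1.1 + Real.sqrt (1 - (r.1.2 / z) ^ 2) * r.2) := by
        refine Measurable.add ?_ ?_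
        · exact ((measurable_snd.comp measurable_fst).div_const _).mul
            (measurable_fst.comp measurable_fst)
        · exact (Real.continuous_sqrt.measurable.comp
            (measurable_const.sub
              (((measurable_snd.comp measurable_fst).div_const _).pow_const 2))).mul
            measurable_snd
      have hgm : Measurable (fun r : ℝ × ℝ =>
          γ ((fun g' => r.2 / z * r.1 + Real.sqrt (1 - (r.2 / z) ^ 2) * g') ⁻¹' t)) :=
        measurable_measure_apply_comp γ hsec ht
      rw [lintegral_lintegral_swap]
      · calc ∫⁻ x, ∫⁻ g, s.indicator
              (fun x => γ ((fun g' => x / z * g + Real.sqrt (1 - (x / z) ^ 2) * g') ⁻¹' t)) x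
              ∂γ ∂(ν z)
            = ∫⁻ x, s.indicator (fun _ => γ t) x ∂(ν z) := by
              refine lintegral_congr_ae ?_
              filter_upwards [hzae] with x hx
              by_cases hxs : x ∈ s
              · simp only [Set.indicator_of_mem hxs]
                have hc2 : (x / z) ^ 2 ≤ 1 := by
                  have h0 : 0 ≤ x / z := div_nonneg hx.1 hz0.le
                  have h1 : x / z ≤ 1 := (div_le_one hz0).mpr hx.2
                  nlinarith
                have hm : Measurable (fun q : ℝ × ℝ =>
                    x / z * q.1 + Real.sqrt (1 - (x / z) ^ 2) * q.2) :=
                  (measurable_fst.const_mul _).add (measurable_snd.const_mul _)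
                calc ∫⁻ g, γ ((fun g' => x / z * g + Real.sqrt (1 - (x / z) ^ 2) * g') ⁻¹' t) ∂γ
                    = (γ.prod γ) ((fun q : ℝ × ℝ =>
                        x / z * q.1 + Real.sqrt (1 - (x / z) ^ 2) * q.2) ⁻¹' t) := by
                      rw [Measure.prod_apply (hm ht)]
                      rfl
                  _ = ((γ.prod γ).map (fun q : ℝ × ℝ =>
                        x / z * q.1 + Real.sqrt (1 - (x / z) ^ 2) * q.2)) t := by
                      rw [Measure.map_apply hm ht]
                  _ = γ t := by rw [hγ, gaussian_rot hc2]
              · simp [hxs]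
          _ = γ t * ν z s := by rw [lintegral_indicator hs, setLIntegral_const]
      · refine Measurable.aemeasurable ?_
        have huncurry : (Function.uncurry fun g x => s.indicator
            (fun x => γ ((fun g' => x / z * g + Real.sqrt (1 - (x / z) ^ 2) * g') ⁻¹' t)) x)
            = (Prod.snd ⁻¹' s).indicator (fun r : ℝ × ℝ =>
                γ ((fun g' => r.2 / z * r.1 + Real.sqrt (1 - (r.2 / z) ^ 2) * g') ⁻¹' t)) := by
          funext r
          by_cases hr : r.2 ∈ s
          · simp [Function.uncurry, Set.indicator_of_mem, hr]
          · simp [Function.uncurry, Set.indicator_of_notMem, hr]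
        rw [huncurry]
        exact hgm.indicator (measurable_snd hs)
    rw [lintegral_congr_ae step, lintegral_const_mul _ (ν.measurable_coe hs), ← hβs s hs,
      mul_comm]
  refine ⟨?_, by rw [hZG]; exact key2⟩
  -- part 1
  set h : ℝ × ℝ → ℝ × ℝ := fun p => (p.1, p.1 + p.2) with hh
  have hhm : Measurable h := measurable_fst.prodMk (measurable_fst.add measurable_snd)
  have hmap1 : (μ.map fun ω => (Z ω, Z ω + G ω)) = (α.prod γ).map h := by
    rw [← hZG, Measure.map_map hhm (hZ.prodMk hG)]
    rfl
  have haepos : ∀ᵐ p ∂(α.prod γ), 0 < p.1 := by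
    have hα0 : α {z : ℝ | ¬ 0 < z} = 0 := by
      have h1 : ∀ᵐ z ∂α, 0 < z := by
        rw [hα]; exact (ae_map_iff hZ.aemeasurable measurableSet_Ioi).mpr hZpos
      exact h1
    rw [ae_iff]
    have : {p : ℝ × ℝ | ¬ 0 < p.1} = {z : ℝ | ¬ 0 < z} ×ˢ (Set.univ : Set ℝ) := by
      ext p; simp
    rw [this, Measure.prod_prod, hα0, zero_mul]
  have hMh : ∀ᵐ p ∂(α.prod γ), M (h p) = (M p).map h := by
    filter_upwards [haepos] with p hp
    have hp1 : p.1 ≠ 0 := ne_of_gt hp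
    have h1 : h p = (p.1, p.1 + p.2) := rfl
    rw [hM, h1]
    simp only
    rw [Measure.map_map hhm (hfmeas p)]
    congr 1
    funext q
    simp only [Function.comp_apply, hh]
    refine congrArg (Prod.mk q.1) ?_
    field_simp
    ring
  rw [hmap1]
  have hbindmap : ((α.prod γ).map h).bind M = ((α.prod γ).bind M).map h := by
    ext u hu
    have hcoe : Measurable fun p : ℝ × ℝ => M p u := (Measure.measurable_coe hu).comp hMmeas
    rw [Measure.bind_apply hu hMmeas.aemeasurable, lintegral_map hcoe hhm,
      Measure.map_apply hhm hu, Measure.bind_apply (hhm hu) hMmeas.aemeasurable]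
    refine lintegral_congr_ae ?_
    filter_upwards [hMh] with p hp
    rw [hp, Measure.map_apply hhm hu]
  rw [hbindmap, key2]
end
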